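/- arXiv:2102.09132 — 5 statements merged into one kernel-verified Lean document; each statement's English description precedes it below -/
import Mathlib

section
/- A market equilibrium (x*, p*, τ*) exists if and only if the linear program (LP) has an optimal solution all of whose entries lie in {0,1}. -/
open Classical
noncomputable section

/-- Data of the autonomous carpooling market of Ostrovsky–Schwarz:
an abstract finite edge set `E` with integer capacities and positive travel times,
a finite route set `R` (each route given by its finite set of edges),
a finite set of riders `M`, a car capacity `A`, and rider preference parameters
`α` (value of arriving), `β` (value of time), `γ` (carpool disutility, depending on
group size) and a per-rider per-unit-time operation cost `δ`. -/
structure CarpoolMarket where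
  /-- edges of the network -/
  E : Type
  /-- routes of the network (origin–destination paths) -/
  R : Type
  /-- riders -/
  M : Type
  [fintypeE : Fintype E]
  [fintypeR : Fintype R]
  [fintypeM : Fintype M]
  [decEqM : DecidableEq M]
  /-- integer edge capacities `q_e ≥ 1` -/
  q : E → ℕ
  q_pos : ∀ e, 1 ≤ q e
  /-- edge travel times `t_e > 0` -/
  t : E → ℝ
  t_pos : ∀ e, 0 < t e
  /-- the (finite) set of edges of each route -/
  edges : R → Finset E
  /-- car capacity -/
  A : ℕ
  A_pos : 1 ≤ A
  /-- value of arriving at the destination -/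
  α : M → ℝ
  /-- value of time -/
  β : M → ℝ
  /-- carpool disutility of rider `m` for a group of size `d`, per unit travel time -/
  γ : M → ℕ → ℝ
  γ_nonneg : ∀ m d, 1 ≤ d → d ≤ A → 0 ≤ γ m d
  γ_one : ∀ m, γ m 1 = 0
  /-- the marginal disutility `γ(d) - γ(d-1)` is nondecreasing in `d` -/
  γ_incr : ∀ m d, 2 ≤ d → d < A → γ m d - γ m (d - 1) ≤ γ m (d + 1) - γ m d
  /-- cost of driving one rider for one unit of travel time -/
  δ : ℝ
  δ_nonneg : 0 ≤ δ

attribute [instance] CarpoolMarket.fintypeE CarpoolMarket.fintypeR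
  CarpoolMarket.fintypeM CarpoolMarket.decEqM

namespace CarpoolMarket

variable (c : CarpoolMarket)

/-- travel time of a route: the sum of travel times of its edges -/
def routeTime (r : c.R) : ℝ := ∑ e ∈ c.edges r, c.t e

/-- the set `B` of feasible rider groups: nonempty subsets of riders of size at most `A` -/
def Groups : Finset (Finset c.M) :=
  Finset.univ.filter fun b => b.Nonempty ∧ b.card ≤ c.A

/-- rider `m`'s value `v_r^m(b)` of the trip `(b, r)` -/
def riderValue (m : c.M) (b : Finset c.M) (r : c.R) : ℝ :=
  c.α m - c.β m * c.routeTime r - c.γ m b.card * c.routeTime r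

/-- cost `c_r(b) = δ |b| t_r` of the trip `(b, r)` -/
def tripCost (b : Finset c.M) (r : c.R) : ℝ := c.δ * (b.card : ℝ) * c.routeTime r

/-- social value `V_r(b)` of the trip `(b, r)` -/
def V (b : Finset c.M) (r : c.R) : ℝ :=
  (∑ m ∈ b, c.riderValue m b r) - c.tripCost b r

/-- load that a (fractional) trip vector `x` places on edge `e` -/
def edgeLoad (x : Finset c.M → c.R → ℝ) (e : c.E) : ℝ :=
  ∑ r ∈ Finset.univ.filter (fun r => e ∈ c.edges r), ∑ b ∈ c.Groups, x b r

/-- feasible solutions of the linear-programming relaxation (LP) -/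
def LPFeasible (x : Finset c.M → c.R → ℝ) : Prop :=
  (∀ b r, 0 ≤ x b r) ∧
  (∀ b r, b ∉ c.Groups → x b r = 0) ∧
  (∀ m : c.M, (∑ r : c.R, ∑ b ∈ c.Groups.filter (fun b => m ∈ b), x b r) ≤ 1) ∧
  (∀ e : c.E, c.edgeLoad x e ≤ (c.q e : ℝ))

/-- social welfare `S(x) = ∑_{b,r} V_r(b) x_r(b)` -/
def welfare (x : Finset c.M → c.R → ℝ) : ℝ :=
  ∑ b ∈ c.Groups, ∑ r : c.R, c.V b r * x b r

/-- a vector has all its entries in `{0,1}` -/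
def IsBinary (x : Finset c.M → c.R → ℝ) : Prop := ∀ b r, x b r = 0 ∨ x b r = 1

/-- optimal solutions of (LP) -/
def LPOptimal (x : Finset c.M → c.R → ℝ) : Prop :=
  c.LPFeasible x ∧ ∀ y, c.LPFeasible y → c.welfare y ≤ c.welfare x

/-- feasible `{0,1}`-valued trip vectors -/
def TripFeasible (x : Finset c.M → c.R → ℝ) : Prop :=
  c.IsBinary x ∧ c.LPFeasible x

/-- utility of rider `m` under the outcome `(x, p)`:
`u^m = ∑_r ∑_{b ∋ m} v_r^m(b) x_r(b) - p^m` -/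
def utility (x : Finset c.M → c.R → ℝ) (p : c.M → ℝ) (m : c.M) : ℝ :=
  (∑ r : c.R, ∑ b ∈ c.Groups.filter (fun b => m ∈ b), c.riderValue m b r * x b r) - p m

/-- total toll collected on a route -/
def routeToll (τ : c.E → ℝ) (r : c.R) : ℝ := ∑ e ∈ c.edges r, τ e

/-- A market equilibrium: a feasible `{0,1}` trip vector, payments and nonnegative tolls
satisfying individual rationality, stability, budget balance and market clearing. -/
def IsEquilibrium (x : Finset c.M → c.R → ℝ) (p : c.M → ℝ) (τ : c.E → ℝ) : Prop :=
  c.TripFeasible x ∧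
  (∀ e, 0 ≤ τ e) ∧
  -- individual rationality
  (∀ m, 0 ≤ c.utility x p m) ∧
  -- stability
  (∀ b ∈ c.Groups, ∀ r : c.R,
      c.V b r - c.routeToll τ r ≤ ∑ m ∈ b, c.utility x p m) ∧
  -- budget balance for organized trips
  (∀ b ∈ c.Groups, ∀ r : c.R, x b r = 1 →
      ∑ m ∈ b, p m = c.routeToll τ r + c.tripCost b r) ∧
  -- riders belonging to no organized trip pay nothing
  (∀ m : c.M, (∀ b r, m ∈ b → x b r = 0) → p m = 0) ∧
  -- market clearing
  (∀ e : c.E, c.edgeLoad x e < (c.q e : ℝ) → τ e = 0)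

end CarpoolMarket



section LPDuality

variable {κ : Type*} [Fintype κ] {ι : Type*} [Fintype ι] [DecidableEq ι]

/-- dot product of two vectors -/
def dotp (x y : κ → ℝ) : ℝ := ∑ k, x k * y k

/-- cone generated by the vectors `v i`, `i ∈ T` -/
def Fcone (v : ι → (κ → ℝ)) (T : Finset ι) : Set (κ → ℝ) :=
  {x | ∃ lam : ι → ℝ, (∀ i ∈ T, 0 ≤ lam i) ∧ x = ∑ i ∈ T, lam i • v i}

/-- "linearly independent" index sets -/
def GoodT (v : ι → (κ → ℝ)) (T : Finset ι) : Prop :=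
  ∀ μ : ι → ℝ, (∑ i ∈ T, μ i • v i = 0) → ∀ i ∈ T, μ i = 0

lemma caratheodory (v : ι → (κ → ℝ)) :
    ∀ T : Finset ι, ∀ x ∈ Fcone v T, ∃ T', T' ⊆ T ∧ GoodT v T' ∧ x ∈ Fcone v T' := by
  intro T
  induction T using Finset.strongInduction with
  | _ T ih =>
    intro x hx
    by_cases hg : GoodT v T
    · exact ⟨T, le_refl _, hg, hx⟩
    · simp only [GoodT, not_forall] at hg
      obtain ⟨μ0, hμsum, i1, hi1T, hμi1⟩ := hg
      obtain ⟨lam, hlam0, hlamx⟩ := hx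
      -- wlog there is a positive coordinate
      obtain ⟨ν, hνsum, j, hjT, hνj⟩ :
          ∃ ν : ι → ℝ, (∑ i ∈ T, ν i • v i = 0) ∧ ∃ j ∈ T, 0 < ν j := by
        rcases lt_or_gt_of_ne hμi1 with h | h
        · refine ⟨fun i => -μ0 i, ?_, i1, hi1T, by simp only [neg_pos]; exact h⟩
          have : ∑ i ∈ T, (fun i => -μ0 i) i • v i = -∑ i ∈ T, μ0 i • v i := by
            rw [← Finset.sum_neg_distrib]
            exact Finset.sum_congr rfl fun i _ => by rw [neg_smul]
          rw [this, hμsum, neg_zero]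
        · exact ⟨μ0, hμsum, i1, hi1T, h⟩
      set P := T.filter (fun i => 0 < ν i) with hP
      have hPne : P.Nonempty := ⟨j, Finset.mem_filter.2 ⟨hjT, hνj⟩⟩
      obtain ⟨i0, hi0P, hmin⟩ := Finset.exists_min_image P (fun i => lam i / ν i) hPne
      have hi0T : i0 ∈ T := (Finset.mem_filter.1 hi0P).1
      have hνi0 : 0 < ν i0 := (Finset.mem_filter.1 hi0P).2
      set t := lam i0 / ν i0 with ht
      have ht0 : 0 ≤ t := div_nonneg (hlam0 i0 hi0T) hνi0.le
      set lam' := fun i => lam i - t * ν i with hlam'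
      have hlam'0 : ∀ i ∈ T, 0 ≤ lam' i := by
        intro i hiT
        by_cases hνi : 0 < ν i
        · have := hmin i (Finset.mem_filter.2 ⟨hiT, hνi⟩)
          have : t * ν i ≤ lam i := by
            rw [← le_div_iff₀ hνi] at *; linarith [this]
          simp [hlam']; linarith
        · push_neg at hνi
          have h1 : t * ν i ≤ 0 := mul_nonpos_of_nonneg_of_nonpos ht0 hνi
          have := hlam0 i hiT
          simp [hlam']; linarith
      have hlam'i0 : lam' i0 = 0 := by
        simp [hlam', ht, div_mul_cancel₀ _ (ne_of_gt hνi0)]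
      have hsum' : ∑ i ∈ T, lam' i • v i = x := by
        simp only [hlam', sub_smul, Finset.sum_sub_distrib]
        have : ∑ i ∈ T, (t * ν i) • v i = t • ∑ i ∈ T, ν i • v i := by
          rw [Finset.smul_sum]; congr 1; ext i; rw [smul_smul]
        rw [this, hνsum, smul_zero, sub_zero, ← hlamx]
      have hx' : x ∈ Fcone v (T.erase i0) := by
        refine ⟨lam', fun i hi => hlam'0 i (Finset.mem_of_mem_erase hi), ?_⟩
        have := Finset.sum_erase_add T (fun i => lam' i • v i) hi0T
        simp only [hlam'i0, zero_smul, add_zero] at this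
        rw [this, hsum']
      obtain ⟨T', hT'sub, hT'good, hxT'⟩ := ih (T.erase i0) (Finset.erase_ssubset hi0T) x hx'
      exact ⟨T', hT'sub.trans (Finset.erase_subset _ _), hT'good, hxT'⟩

lemma isClosed_Fcone (v : ι → (κ → ℝ)) (T : Finset ι) (hT : GoodT v T) :
    IsClosed (Fcone v T) := by
  let L : ({i // i ∈ T} → ℝ) →ₗ[ℝ] (κ → ℝ) :=
    { toFun := fun lam => ∑ i : {i // i ∈ T}, lam i • v i
      map_add' := by
        intro a b
        simp [add_smul, Finset.sum_add_distrib]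
      map_smul' := by
        intro cc a
        simp only [Pi.smul_apply, smul_eq_mul, RingHom.id_apply, Finset.smul_sum, smul_smul] }
  have hker : LinearMap.ker L = ⊥ := by
    rw [LinearMap.ker_eq_bot']
    intro lam hlam
    set μ : ι → ℝ := fun i => if h : i ∈ T then lam ⟨i, h⟩ else 0 with hμ
    have hμsum : ∑ i ∈ T, μ i • v i = 0 := by
      rw [← Finset.sum_attach T (fun i => μ i • v i)]
      have : ∀ i : {i // i ∈ T}, μ i.1 • v i.1 = lam i • v i.1 := by
        intro i; simp [hμ, i.2]
      rw [Finset.sum_congr rfl (fun i _ => this i)]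
      exact hlam
    funext i
    have := hT μ hμsum i.1 i.2
    simpa [hμ, i.2] using this
  have hemb := LinearMap.isClosedEmbedding_of_injective hker
  have hset : IsClosed {lam : {i // i ∈ T} → ℝ | ∀ i, 0 ≤ lam i} := by
    have : {lam : {i // i ∈ T} → ℝ | ∀ i, 0 ≤ lam i} = ⋂ i, {lam | 0 ≤ lam i} := by
      ext lam; simp [Set.mem_iInter]
    rw [this]
    exact isClosed_iInter fun i => isClosed_le continuous_const (continuous_apply i)
  have himg : Fcone v T = L '' {lam | ∀ i, 0 ≤ lam i} := by
    ext x
    constructor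
    · rintro ⟨lam, hlam0, rfl⟩
      refine ⟨fun i => lam i.1, fun i => hlam0 i.1 i.2, ?_⟩
      show ∑ i : {i // i ∈ T}, lam i.1 • v i.1 = _
      rw [Finset.sum_coe_sort T (fun i => lam i • v i)]
    · rintro ⟨lam, hlam0, rfl⟩
      refine ⟨fun i => if h : i ∈ T then lam ⟨i, h⟩ else 0, fun i hi => by simp [hi, hlam0 ⟨i, hi⟩], ?_⟩
      show L lam = _
      show L lam = _
      rw [← Finset.sum_coe_sort T (fun i => (if h : i ∈ T then lam ⟨i, h⟩ else 0) • v i)]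
      simp only [L, LinearMap.coe_mk, AddHom.coe_mk]
      exact Finset.sum_congr rfl fun i _ => by simp [i.2]
  rw [himg]
  exact hemb.isClosedMap _ hset


/-- the cone generated by all the `v i` -/
def ConeSet (v : ι → (κ → ℝ)) : Set (κ → ℝ) := Fcone v Finset.univ

lemma isClosed_coneSet (v : ι → (κ → ℝ)) : IsClosed (ConeSet v) := by
  have hrep : ConeSet v = ⋃ T : Finset ι, (if GoodT v T then Fcone v T else ∅) := by
    ext x
    simp only [Set.mem_iUnion]
    constructor
    · intro hx
      obtain ⟨T, _, hgood, hxT⟩ := caratheodory v Finset.univ x hx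
      exact ⟨T, by rw [if_pos hgood]; exact hxT⟩
    · rintro ⟨T, hxT⟩
      by_cases hg : GoodT v T
      · rw [if_pos hg] at hxT
        obtain ⟨lam, hlam0, rfl⟩ := hxT
        refine ⟨fun i => if i ∈ T then lam i else 0, fun i _ => ?_, ?_⟩
        · by_cases h : i ∈ T
          · simp only [h, if_true]; exact hlam0 i h
          · simp only [h, if_false]; exact le_refl 0
        · have : ∀ i ∈ Finset.univ, (if i ∈ T then lam i else 0) • v i
              = if i ∈ T then lam i • v i else 0 := fun i _ => by
            split <;> simp
          rw [Finset.sum_congr rfl this, Finset.sum_ite_mem, Finset.univ_inter]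
      · rw [if_neg hg] at hxT
        exact absurd hxT (Set.notMem_empty x)
  rw [hrep]
  exact isClosed_iUnion_of_finite fun T => by
    split
    · exact isClosed_Fcone v T ‹_›
    · exact isClosed_empty

lemma convex_coneSet (v : ι → (κ → ℝ)) : Convex ℝ (ConeSet v) := by
  rintro x ⟨lx, hlx0, rfl⟩ y ⟨ly, hly0, rfl⟩ a b ha hb _
  refine ⟨fun i => a * lx i + b * ly i,
    fun i hi => add_nonneg (mul_nonneg ha (hlx0 i hi)) (mul_nonneg hb (hly0 i hi)), ?_⟩
  rw [Finset.smul_sum, Finset.smul_sum, ← Finset.sum_add_distrib]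
  exact Finset.sum_congr rfl fun i _ => by
    rw [add_smul, smul_smul, smul_smul]

lemma zero_mem_coneSet (v : ι → (κ → ℝ)) : (0 : κ → ℝ) ∈ ConeSet v :=
  ⟨0, fun i _ => le_refl 0, by simp⟩

lemma farkas (v : ι → (κ → ℝ)) (b : κ → ℝ) (hb : b ∉ ConeSet v) :
    ∃ y : κ → ℝ, (∀ i, 0 ≤ dotp (v i) y) ∧ dotp b y < 0 := by
  obtain ⟨f, u, hfb, hfs⟩ :=
    geometric_hahn_banach_point_closed (convex_coneSet v) (isClosed_coneSet v) hb
  set y : κ → ℝ := fun k => f (fun j => if k = j then 1 else 0) with hy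
  have hrep : ∀ x : κ → ℝ, f x = dotp x y := by
    intro x
    conv_lhs => rw [pi_eq_sum_univ x]
    rw [map_sum]
    exact Finset.sum_congr rfl fun k _ => by rw [map_smul, smul_eq_mul]
  have hu0 : u < 0 := by
    have := hfs 0 (zero_mem_coneSet v)
    rwa [map_zero] at this
  have hvy : ∀ i, 0 ≤ f (v i) := by
    intro i
    by_contra hneg
    push_neg at hneg
    set t := u / f (v i) with hts
    have ht : 0 < t := div_pos_of_neg_of_neg hu0 hneg
    have hmem : t • v i ∈ ConeSet v := by
      refine ⟨fun j => if j = i then t else 0,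
        fun j _ => by dsimp only; split <;> [exact ht.le; exact le_refl 0], ?_⟩
      have hterm : ∀ j ∈ Finset.univ, (fun j => if j = i then t else 0) j • v j
          = if j = i then t • v i else 0 := by
        intro j _
        dsimp only
        split
        · rename_i h; rw [h]
        · rw [zero_smul]
      rw [Finset.sum_congr rfl hterm, Finset.sum_ite_eq']
      simp
    have := hfs _ hmem
    rw [map_smul, smul_eq_mul, hts, div_mul_cancel₀ _ (ne_of_lt hneg)] at this
    exact lt_irrefl u this
  refine ⟨y, fun i => by rw [← hrep]; exact hvy i, ?_⟩
  rw [← hrep]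
  exact hfb.trans hu0

lemma lp_duality {ι' κ' : Type*} [Fintype ι'] [Fintype κ'] [DecidableEq ι'] [DecidableEq κ']
    (A : κ' → ι' → ℝ) (bb : κ' → ℝ) (cc : ι' → ℝ) (x : ι' → ℝ)
    (hx0 : ∀ i, 0 ≤ x i) (hxf : ∀ k, (∑ i, A k i * x i) ≤ bb k)
    (hopt : ∀ z : ι' → ℝ, (∀ i, 0 ≤ z i) → (∀ k, (∑ i, A k i * z i) ≤ bb k) →
      (∑ i, cc i * z i) ≤ ∑ i, cc i * x i) :
    ∃ y : κ' → ℝ, (∀ k, 0 ≤ y k) ∧ (∀ i, cc i ≤ ∑ k, y k * A k i) ∧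
      (∑ k, y k * bb k) ≤ ∑ i, cc i * x i := by
  classical
  set s := ∑ i, cc i * x i with hs
  set d : ι' ⊕ Unit → ℝ := Sum.elim (fun i => -cc i) (fun _ => s) with hd
  set g : (κ' ⊕ (ι' ⊕ Unit)) → (ι' ⊕ Unit → ℝ) :=
    Sum.elim (fun k => Sum.elim (fun i => -A k i) (fun _ => bb k))
      (fun j j' => if j = j' then 1 else 0) with hg
  by_cases hdc : d ∈ ConeSet g
  · obtain ⟨lam, hlam0, hrep⟩ := hdc
    have hcoord : ∀ j : ι' ⊕ Unit,
        d j = (∑ k : κ', lam (Sum.inl k) * g (Sum.inl k) j) + lam (Sum.inr j) := by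
      intro j
      have h1 := congrFun hrep j
      rw [Finset.sum_apply] at h1
      have h2 : ∀ cix : κ' ⊕ (ι' ⊕ Unit), (lam cix • g cix) j = lam cix * g cix j :=
        fun cix => rfl
      rw [Finset.sum_congr rfl (fun cix _ => h2 cix), Fintype.sum_sum_type] at h1
      have h3 : (∑ j' : ι' ⊕ Unit, lam (Sum.inr j') * g (Sum.inr j') j) = lam (Sum.inr j) := by
        have : ∀ j' : ι' ⊕ Unit, lam (Sum.inr j') * g (Sum.inr j') j
            = if j' = j then lam (Sum.inr j') else 0 := by
          intro j'
          simp only [hg, Sum.elim_inr]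
          split <;> simp [*]
        rw [Finset.sum_congr rfl (fun j' _ => this j'), Finset.sum_ite_eq']
        simp
      rw [h3] at h1
      exact h1
    refine ⟨fun k => lam (Sum.inl k), fun k => hlam0 _ (Finset.mem_univ _), ?_, ?_⟩
    · intro i
      show cc i ≤ ∑ k : κ', lam (Sum.inl k) * A k i
      have := hcoord (Sum.inl i)
      simp only [hd, hg, Sum.elim_inl] at this
      have hnn := hlam0 (Sum.inr (Sum.inl i)) (Finset.mem_univ _)
      have harr : (∑ k : κ', lam (Sum.inl k) * -A k i) = -∑ k : κ', lam (Sum.inl k) * A k i := by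
        rw [← Finset.sum_neg_distrib]
        exact Finset.sum_congr rfl fun k _ => by ring
      rw [harr] at this
      linarith
    · have := hcoord (Sum.inr ())
      simp only [hd, hg, Sum.elim_inr, Sum.elim_inl] at this
      have hnn := hlam0 (Sum.inr (Sum.inr ())) (Finset.mem_univ _)
      show (∑ k : κ', lam (Sum.inl k) * bb k) ≤ s
      linarith
  · obtain ⟨w, hw1, hw2⟩ := farkas g d hdc
    exfalso
    set xv : ι' → ℝ := fun i => w (Sum.inl i) with hxv
    set t : ℝ := w (Sum.inr ()) with htw
    have hw0 : ∀ j : ι' ⊕ Unit, 0 ≤ w j := by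
      intro j
      have := hw1 (Sum.inr j)
      rw [dotp] at this
      have heq : (∑ j' : ι' ⊕ Unit, g (Sum.inr j) j' * w j') = w j := by
        have : ∀ j', g (Sum.inr j) j' * w j' = if j' = j then w j' else 0 := by
          intro j'
          simp only [hg, Sum.elim_inr]
          by_cases h : j' = j
          · subst h; simp
          · rw [if_neg (fun h' => h h'.symm), if_neg h, zero_mul]
        rw [Finset.sum_congr rfl (fun j' _ => this j'), Finset.sum_ite_eq']
        simp
      rwa [heq] at this
    have h1 : ∀ k, (∑ i, A k i * xv i) ≤ bb k * t := by
      intro k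
      have hk := hw1 (Sum.inl k)
      rw [dotp, Fintype.sum_sum_type] at hk
      simp only [hg, Sum.elim_inl, Sum.elim_inr] at hk
      rw [Fintype.sum_unique (fun u : Unit => bb k * w (Sum.inr u))] at hk
      have hneg : (∑ i : ι', -A k i * w (Sum.inl i)) = -∑ i : ι', A k i * xv i := by
        rw [← Finset.sum_neg_distrib]
        exact Finset.sum_congr rfl fun i _ => by rw [hxv]; ring
      rw [hneg] at hk
      rw [htw]
      linarith
    have h2 : s * t < ∑ i, cc i * xv i := by
      have hk := hw2
      rw [dotp, Fintype.sum_sum_type] at hk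
      simp only [hd, Sum.elim_inl, Sum.elim_inr] at hk
      rw [Fintype.sum_unique (fun u : Unit => s * w (Sum.inr u))] at hk
      have hneg : (∑ i : ι', -cc i * w (Sum.inl i)) = -∑ i : ι', cc i * xv i := by
        rw [← Finset.sum_neg_distrib]
        exact Finset.sum_congr rfl fun i _ => by rw [hxv]; ring
      rw [hneg] at hk
      rw [htw]
      linarith
    have hxv0 : ∀ i, 0 ≤ xv i := fun i => hw0 (Sum.inl i)
    have ht0 : 0 ≤ t := hw0 (Sum.inr ())
    rcases eq_or_lt_of_le ht0 with hteq | htpos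
    · -- t = 0 : move along the ray x + xv
      have hzf : ∀ k, (∑ i, A k i * (x i + xv i)) ≤ bb k := by
        intro k
        have := h1 k
        rw [← hteq, mul_zero] at this
        have hsplit : (∑ i, A k i * (x i + xv i))
            = (∑ i, A k i * x i) + ∑ i, A k i * xv i := by
          rw [← Finset.sum_add_distrib]
          exact Finset.sum_congr rfl fun i _ => by ring
        rw [hsplit]
        linarith [hxf k]
      have hval := hopt (fun i => x i + xv i) (fun i => add_nonneg (hx0 i) (hxv0 i)) hzf
      have hsplit : (∑ i, cc i * (x i + xv i)) = (∑ i, cc i * x i) + ∑ i, cc i * xv i := by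
        rw [← Finset.sum_add_distrib]
        exact Finset.sum_congr rfl fun i _ => by ring
      rw [hsplit] at hval
      rw [← hteq, mul_zero] at h2
      linarith
    · -- t > 0 : xv / t is a better feasible point
      have hzf : ∀ k, (∑ i, A k i * (xv i / t)) ≤ bb k := by
        intro k
        have hsplit : (∑ i, A k i * (xv i / t)) = (∑ i, A k i * xv i) / t := by
          rw [Finset.sum_div]
          exact Finset.sum_congr rfl fun i _ => by ring
        rw [hsplit, div_le_iff₀ htpos]
        linarith [h1 k]
      have hval := hopt (fun i => xv i / t) (fun i => div_nonneg (hxv0 i) ht0) hzf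
      have hsplit : (∑ i, cc i * (xv i / t)) = (∑ i, cc i * xv i) / t := by
        rw [Finset.sum_div]
        exact Finset.sum_congr rfl fun i _ => by ring
      rw [hsplit, div_le_iff₀ htpos] at hval
      nlinarith

end LPDuality

namespace CarpoolMarket

variable (c : CarpoolMarket)

/-- double-sum exchange: groups/riders -/
lemma sum_group_swap (F : c.M → Finset c.M → c.R → ℝ) (z : Finset c.M → c.R → ℝ) :
    ∑ b ∈ c.Groups, ∑ r : c.R, (∑ m ∈ b, F m b r) * z b r
      = ∑ m : c.M, ∑ r : c.R, ∑ b ∈ c.Groups.filter (fun b => m ∈ b), F m b r * z b r := by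
  calc ∑ b ∈ c.Groups, ∑ r : c.R, (∑ m ∈ b, F m b r) * z b r
      = ∑ b ∈ c.Groups, ∑ r : c.R, ∑ m : c.M, if m ∈ b then F m b r * z b r else 0 := by
        refine Finset.sum_congr rfl fun b _ => Finset.sum_congr rfl fun r _ => ?_
        rw [Finset.sum_ite_mem, Finset.univ_inter, Finset.sum_mul]
    _ = ∑ b ∈ c.Groups, ∑ m : c.M, ∑ r : c.R, if m ∈ b then F m b r * z b r else 0 :=
        Finset.sum_congr rfl fun b _ => Finset.sum_comm
    _ = ∑ m : c.M, ∑ b ∈ c.Groups, ∑ r : c.R, if m ∈ b then F m b r * z b r else 0 :=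
        Finset.sum_comm
    _ = ∑ m : c.M, ∑ r : c.R, ∑ b ∈ c.Groups, if m ∈ b then F m b r * z b r else 0 :=
        Finset.sum_congr rfl fun m _ => Finset.sum_comm
    _ = _ := by
        refine Finset.sum_congr rfl fun m _ => Finset.sum_congr rfl fun r _ => ?_
        rw [Finset.sum_filter]

/-- double-sum exchange: tolls/edges -/
lemma sum_toll_swap (τ : c.E → ℝ) (z : Finset c.M → c.R → ℝ) :
    ∑ b ∈ c.Groups, ∑ r : c.R, c.routeToll τ r * z b r = ∑ e : c.E, τ e * c.edgeLoad z e := by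
  calc ∑ b ∈ c.Groups, ∑ r : c.R, c.routeToll τ r * z b r
      = ∑ b ∈ c.Groups, ∑ r : c.R, ∑ e : c.E, if e ∈ c.edges r then τ e * z b r else 0 := by
        refine Finset.sum_congr rfl fun b _ => Finset.sum_congr rfl fun r _ => ?_
        rw [Finset.sum_ite_mem, Finset.univ_inter, routeToll, Finset.sum_mul]
    _ = ∑ b ∈ c.Groups, ∑ e : c.E, ∑ r : c.R, if e ∈ c.edges r then τ e * z b r else 0 :=
        Finset.sum_congr rfl fun b _ => Finset.sum_comm
    _ = ∑ e : c.E, ∑ b ∈ c.Groups, ∑ r : c.R, if e ∈ c.edges r then τ e * z b r else 0 :=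
        Finset.sum_comm
    _ = ∑ e : c.E, ∑ r : c.R, ∑ b ∈ c.Groups, if e ∈ c.edges r then τ e * z b r else 0 :=
        Finset.sum_congr rfl fun e _ => Finset.sum_comm
    _ = _ := by
        refine Finset.sum_congr rfl fun e _ => ?_
        rw [edgeLoad, Finset.sum_filter, Finset.mul_sum]
        refine Finset.sum_congr rfl fun r _ => ?_
        by_cases h : e ∈ c.edges r
        · simp only [if_pos h]
          exact (Finset.mul_sum _ _ _).symm
        · simp only [if_neg h, mul_zero]
          exact Finset.sum_const_zero

/-- summation over the index type of the abstract LP -/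
lemma sum_iota (f : Finset c.M → c.R → ℝ) :
    ∑ i : {b // b ∈ c.Groups} × c.R, f i.1.1 i.2 = ∑ b ∈ c.Groups, ∑ r : c.R, f b r := by
  rw [Fintype.sum_prod_type]
  exact Finset.sum_coe_sort c.Groups (fun b => ∑ r : c.R, f b r)

lemma T1 (w : {b // b ∈ c.Groups} × c.R → ℝ) (z : Finset c.M → c.R → ℝ)
    (hlink : ∀ (b : {b // b ∈ c.Groups}) (r : c.R), z b.1 r = w (b, r)) (m : c.M) :
    ∑ i : {b // b ∈ c.Groups} × c.R, (if m ∈ i.1.1 then (1:ℝ) else 0) * w i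
      = ∑ r : c.R, ∑ b ∈ c.Groups.filter (fun b => m ∈ b), z b r := by
  have h1 : ∀ i : {b // b ∈ c.Groups} × c.R, (if m ∈ i.1.1 then (1:ℝ) else 0) * w i
      = (fun b r => if m ∈ b then z b r else 0) i.1.1 i.2 := by
    rintro ⟨b, r⟩
    rw [← hlink b r]
    dsimp only
    split
    · rw [one_mul]
    · rw [zero_mul]
  calc ∑ i : {b // b ∈ c.Groups} × c.R, (if m ∈ i.1.1 then (1:ℝ) else 0) * w i
      = ∑ i : {b // b ∈ c.Groups} × c.R, (fun b r => if m ∈ b then z b r else 0) i.1.1 i.2 :=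
        Finset.sum_congr rfl fun i _ => h1 i
    _ = ∑ b ∈ c.Groups, ∑ r : c.R, if m ∈ b then z b r else 0 :=
        c.sum_iota (fun b r => if m ∈ b then z b r else 0)
    _ = ∑ r : c.R, ∑ b ∈ c.Groups, if m ∈ b then z b r else 0 := Finset.sum_comm
    _ = _ := Finset.sum_congr rfl fun r _ => (Finset.sum_filter _ _).symm

lemma T2 (w : {b // b ∈ c.Groups} × c.R → ℝ) (z : Finset c.M → c.R → ℝ)
    (hlink : ∀ (b : {b // b ∈ c.Groups}) (r : c.R), z b.1 r = w (b, r)) (e : c.E) :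
    ∑ i : {b // b ∈ c.Groups} × c.R, (if e ∈ c.edges i.2 then (1:ℝ) else 0) * w i
      = c.edgeLoad z e := by
  have h1 : ∀ i : {b // b ∈ c.Groups} × c.R, (if e ∈ c.edges i.2 then (1:ℝ) else 0) * w i
      = (fun b r => if e ∈ c.edges r then z b r else 0) i.1.1 i.2 := by
    rintro ⟨b, r⟩
    rw [← hlink b r]
    dsimp only
    split
    · rw [one_mul]
    · rw [zero_mul]
  calc ∑ i : {b // b ∈ c.Groups} × c.R, (if e ∈ c.edges i.2 then (1:ℝ) else 0) * w i
      = ∑ i : {b // b ∈ c.Groups} × c.R, (fun b r => if e ∈ c.edges r then z b r else 0) i.1.1 i.2 :=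
        Finset.sum_congr rfl fun i _ => h1 i
    _ = ∑ b ∈ c.Groups, ∑ r : c.R, if e ∈ c.edges r then z b r else 0 :=
        c.sum_iota (fun b r => if e ∈ c.edges r then z b r else 0)
    _ = ∑ r : c.R, ∑ b ∈ c.Groups, if e ∈ c.edges r then z b r else 0 := Finset.sum_comm
    _ = _ := by
      rw [edgeLoad, Finset.sum_filter]
      refine Finset.sum_congr rfl fun r _ => ?_
      split
      · rfl
      · exact Finset.sum_const_zero

lemma T3 (w : {b // b ∈ c.Groups} × c.R → ℝ) (z : Finset c.M → c.R → ℝ)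
    (hlink : ∀ (b : {b // b ∈ c.Groups}) (r : c.R), z b.1 r = w (b, r)) :
    ∑ i : {b // b ∈ c.Groups} × c.R, c.V i.1.1 i.2 * w i = c.welfare z := by
  have h1 : ∀ i : {b // b ∈ c.Groups} × c.R, c.V i.1.1 i.2 * w i
      = (fun b r => c.V b r * z b r) i.1.1 i.2 := by
    rintro ⟨b, r⟩
    rw [← hlink b r]
  calc ∑ i : {b // b ∈ c.Groups} × c.R, c.V i.1.1 i.2 * w i
      = ∑ i : {b // b ∈ c.Groups} × c.R, (fun b r => c.V b r * z b r) i.1.1 i.2 :=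
        Finset.sum_congr rfl fun i _ => h1 i
    _ = ∑ b ∈ c.Groups, ∑ r : c.R, c.V b r * z b r := c.sum_iota (fun b r => c.V b r * z b r)
    _ = c.welfare z := rfl

/-- a rider belongs to at most one organized trip -/
lemma trip_unique {x : Finset c.M → c.R → ℝ} (hbin : c.IsBinary x)
    (hxm : ∀ m : c.M, (∑ r : c.R, ∑ b ∈ c.Groups.filter (fun b => m ∈ b), x b r) ≤ 1)
    (hxG : ∀ b r, b ∉ c.Groups → x b r = 0)
    {m : c.M} {b : Finset c.M} {r : c.R} (hmb : m ∈ b) (hbG : b ∈ c.Groups) (hx1 : x b r = 1)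
    {b' : Finset c.M} {r' : c.R} (hmb' : m ∈ b') (hne : ¬(b' = b ∧ r' = r)) :
    x b' r' = 0 := by
  by_cases hbG' : b' ∈ c.Groups
  swap
  · exact hxG _ _ hbG'
  have hx0 : ∀ b r, 0 ≤ x b r := fun b r => by rcases hbin b r with h | h <;> rw [h] <;> norm_num
  have hf0 : ∀ r0 : c.R, 0 ≤ ∑ b0 ∈ c.Groups.filter (fun b => m ∈ b), x b0 r0 :=
    fun r0 => Finset.sum_nonneg fun b0 _ => hx0 b0 r0
  have hmemb : b ∈ c.Groups.filter (fun b => m ∈ b) := Finset.mem_filter.2 ⟨hbG, hmb⟩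
  have hmemb' : b' ∈ c.Groups.filter (fun b => m ∈ b) := Finset.mem_filter.2 ⟨hbG', hmb'⟩
  have hsum := hxm m
  by_cases hrr : r' = r
  · subst hrr
    have hbb : b ≠ b' := fun h => hne ⟨h.symm, rfl⟩
    have h2 : x b r' + x b' r' ≤ ∑ b0 ∈ c.Groups.filter (fun b => m ∈ b), x b0 r' :=
      Finset.add_le_sum (fun b0 _ => hx0 b0 r') hmemb hmemb' hbb
    have h3 : (∑ b0 ∈ c.Groups.filter (fun b => m ∈ b), x b0 r')
        ≤ ∑ r0 : c.R, ∑ b0 ∈ c.Groups.filter (fun b => m ∈ b), x b0 r0 :=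
      Finset.single_le_sum (fun r0 _ => hf0 r0) (Finset.mem_univ r')
    have h4 := hx0 b' r'
    have h5 : x b' r' ≤ 0 := by linarith
    linarith
  · have h2 : x b r ≤ ∑ b0 ∈ c.Groups.filter (fun b => m ∈ b), x b0 r :=
      Finset.single_le_sum (fun b0 _ => hx0 b0 r) hmemb
    have h2' : x b' r' ≤ ∑ b0 ∈ c.Groups.filter (fun b => m ∈ b), x b0 r' :=
      Finset.single_le_sum (fun b0 _ => hx0 b0 r') hmemb'
    have h3 : (∑ b0 ∈ c.Groups.filter (fun b => m ∈ b), x b0 r)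
          + ∑ b0 ∈ c.Groups.filter (fun b => m ∈ b), x b0 r'
        ≤ ∑ r0 : c.R, ∑ b0 ∈ c.Groups.filter (fun b => m ∈ b), x b0 r0 :=
      Finset.add_le_sum (fun r0 _ => hf0 r0) (Finset.mem_univ r) (Finset.mem_univ r') (Ne.symm hrr)
    have h4 := hx0 b' r'
    linarith

/-- summing any quantity over the trips containing a given organized rider picks out
its value at the rider's unique trip -/
lemma sum_over_trips {x : Finset c.M → c.R → ℝ} (hbin : c.IsBinary x)
    (hxm : ∀ m : c.M, (∑ r : c.R, ∑ b ∈ c.Groups.filter (fun b => m ∈ b), x b r) ≤ 1)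
    (hxG : ∀ b r, b ∉ c.Groups → x b r = 0)
    {m : c.M} {b : Finset c.M} {r : c.R} (hmb : m ∈ b) (hbG : b ∈ c.Groups) (hx1 : x b r = 1)
    (φ : Finset c.M → c.R → ℝ) :
    ∑ r' : c.R, ∑ b' ∈ c.Groups.filter (fun b => m ∈ b), φ b' r' * x b' r' = φ b r := by
  have houter : ∀ r' ∈ Finset.univ, r' ≠ r →
      (∑ b' ∈ c.Groups.filter (fun b => m ∈ b), φ b' r' * x b' r') = 0 := by
    intro r' _ hner
    refine Finset.sum_eq_zero fun b' hb' => ?_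
    rw [c.trip_unique hbin hxm hxG hmb hbG hx1 (Finset.mem_filter.1 hb').2
      (fun h => hner h.2), mul_zero]
  rw [Finset.sum_eq_single_of_mem r (Finset.mem_univ r) houter]
  have hinner : ∀ b' ∈ c.Groups.filter (fun b => m ∈ b), b' ≠ b → φ b' r * x b' r = 0 := by
    intro b' hb' hneb
    rw [c.trip_unique hbin hxm hxG hmb hbG hx1 (Finset.mem_filter.1 hb').2
      (fun h => hneb h.1), mul_zero]
  rw [Finset.sum_eq_single_of_mem b (Finset.mem_filter.2 ⟨hbG, hmb⟩) hinner, hx1, mul_one]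

end CarpoolMarket

namespace CarpoolMarket

variable (c : CarpoolMarket)

lemma equilibrium_welfare {x : Finset c.M → c.R → ℝ} {p : c.M → ℝ} {τ : c.E → ℝ}
    (h : c.IsEquilibrium x p τ) :
    c.welfare x = (∑ m : c.M, c.utility x p m) + ∑ e : c.E, τ e * (c.q e : ℝ) := by
  obtain ⟨⟨hbin, hx0, hxG, hxm, hxe⟩, hτ0, hIR, hstab, hBB, hfree, hclear⟩ := h
  have step1 : c.welfare x
      = (∑ b ∈ c.Groups, ∑ r : c.R, (∑ m ∈ b, c.riderValue m b r) * x b r)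
        - ∑ b ∈ c.Groups, ∑ r : c.R, c.tripCost b r * x b r := by
    rw [welfare, ← Finset.sum_sub_distrib]
    refine Finset.sum_congr rfl fun b _ => ?_
    rw [← Finset.sum_sub_distrib]
    refine Finset.sum_congr rfl fun r _ => ?_
    rw [V, sub_mul]
  have step2 : (∑ b ∈ c.Groups, ∑ r : c.R, (∑ m ∈ b, c.riderValue m b r) * x b r)
      = ∑ m : c.M, (c.utility x p m + p m) := by
    rw [c.sum_group_swap (fun m b r => c.riderValue m b r) x]
    refine Finset.sum_congr rfl fun m _ => ?_
    simp only [utility]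
    ring
  have hB1 : ∀ m : c.M,
      p m * (∑ r : c.R, ∑ b ∈ c.Groups.filter (fun b => m ∈ b), x b r) = p m := by
    intro m
    by_cases hm : ∃ b r, m ∈ b ∧ x b r = 1
    · obtain ⟨b, r, hmb, hx1⟩ := hm
      have hbG : b ∈ c.Groups := by
        by_contra hbG
        rw [hxG b r hbG] at hx1
        norm_num at hx1
      have hone : (∑ r' : c.R, ∑ b' ∈ c.Groups.filter (fun b => m ∈ b), x b' r') = 1 := by
        have := c.sum_over_trips hbin hxm hxG hmb hbG hx1 (fun _ _ => (1:ℝ))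
        simpa [one_mul] using this
      rw [hone, mul_one]
    · push_neg at hm
      have hp0 : p m = 0 := hfree m fun b r hmb => by
        rcases hbin b r with h0 | h1
        · exact h0
        · exact absurd h1 (hm b r hmb)
      rw [hp0, zero_mul]
  have hB2 : ∀ e : c.E, τ e * c.edgeLoad x e = τ e * (c.q e : ℝ) := by
    intro e
    rcases lt_or_eq_of_le (hxe e) with hlt | heq
    · rw [hclear e hlt, zero_mul, zero_mul]
    · rw [heq]
  have step3 : (∑ b ∈ c.Groups, ∑ r : c.R, c.tripCost b r * x b r)
      = (∑ m : c.M, p m) - ∑ e : c.E, τ e * (c.q e : ℝ) := by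
    have hptw : ∀ b ∈ c.Groups, ∀ r : c.R,
        c.tripCost b r * x b r = (∑ m ∈ b, p m) * x b r - c.routeToll τ r * x b r := by
      intro b hb r
      rcases hbin b r with h0 | h1
      · rw [h0]; ring
      · rw [h1, mul_one, mul_one, mul_one]
        have := hBB b hb r h1
        linarith
    calc ∑ b ∈ c.Groups, ∑ r : c.R, c.tripCost b r * x b r
        = ∑ b ∈ c.Groups, ∑ r : c.R,
            ((∑ m ∈ b, p m) * x b r - c.routeToll τ r * x b r) := by
          exact Finset.sum_congr rfl fun b hb => Finset.sum_congr rfl fun r _ => hptw b hb r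
      _ = (∑ b ∈ c.Groups, ∑ r : c.R, (∑ m ∈ b, p m) * x b r)
            - ∑ b ∈ c.Groups, ∑ r : c.R, c.routeToll τ r * x b r := by
          rw [← Finset.sum_sub_distrib]
          exact Finset.sum_congr rfl fun b _ => Finset.sum_sub_distrib _ _
      _ = (∑ m : c.M, ∑ r : c.R, ∑ b ∈ c.Groups.filter (fun b => m ∈ b), p m * x b r)
            - ∑ e : c.E, τ e * c.edgeLoad x e := by
          rw [c.sum_group_swap (fun m _ _ => p m) x, c.sum_toll_swap τ x]
      _ = (∑ m : c.M, p m) - ∑ e : c.E, τ e * (c.q e : ℝ) := by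
          congr 1
          · refine Finset.sum_congr rfl fun m _ => ?_
            have hpull : (∑ r : c.R, ∑ b ∈ c.Groups.filter (fun b => m ∈ b), p m * x b r)
                = p m * ∑ r : c.R, ∑ b ∈ c.Groups.filter (fun b => m ∈ b), x b r := by
              rw [Finset.mul_sum]
              exact Finset.sum_congr rfl fun r _ => (Finset.mul_sum _ _ _).symm
            rw [hpull, hB1 m]
          · exact Finset.sum_congr rfl fun e _ => hB2 e
  rw [step1, step2, step3, Finset.sum_add_distrib]
  ring

lemma equilibrium_forward {x : Finset c.M → c.R → ℝ} {p : c.M → ℝ} {τ : c.E → ℝ}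
    (h : c.IsEquilibrium x p τ) : c.LPOptimal x ∧ c.IsBinary x := by
  have hW1 := c.equilibrium_welfare h
  obtain ⟨⟨hbin, hx0, hxG, hxm, hxe⟩, hτ0, hIR, hstab, hBB, hfree, hclear⟩ := h
  refine ⟨⟨⟨hx0, hxG, hxm, hxe⟩, ?_⟩, hbin⟩
  intro y hy
  obtain ⟨hy0, hyG, hym, hye⟩ := hy
  calc c.welfare y
      ≤ ∑ b ∈ c.Groups, ∑ r : c.R,
          ((∑ m ∈ b, c.utility x p m) + c.routeToll τ r) * y b r := by
        refine Finset.sum_le_sum fun b hb => Finset.sum_le_sum fun r _ => ?_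
        refine mul_le_mul_of_nonneg_right ?_ (hy0 b r)
        have := hstab b hb r
        linarith
    _ = (∑ b ∈ c.Groups, ∑ r : c.R, (∑ m ∈ b, c.utility x p m) * y b r)
          + ∑ b ∈ c.Groups, ∑ r : c.R, c.routeToll τ r * y b r := by
        rw [← Finset.sum_add_distrib]
        refine Finset.sum_congr rfl fun b _ => ?_
        rw [← Finset.sum_add_distrib]
        exact Finset.sum_congr rfl fun r _ => add_mul _ _ _
    _ = (∑ m : c.M, ∑ r : c.R, ∑ b ∈ c.Groups.filter (fun b => m ∈ b),
            c.utility x p m * y b r)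
          + ∑ e : c.E, τ e * c.edgeLoad y e := by
        rw [c.sum_group_swap (fun m _ _ => c.utility x p m) y, c.sum_toll_swap τ y]
    _ ≤ (∑ m : c.M, c.utility x p m) + ∑ e : c.E, τ e * (c.q e : ℝ) := by
        refine add_le_add (Finset.sum_le_sum fun m _ => ?_)
          (Finset.sum_le_sum fun e _ => mul_le_mul_of_nonneg_left (hye e) (hτ0 e))
        have hpull : (∑ r : c.R, ∑ b ∈ c.Groups.filter (fun b => m ∈ b),
              c.utility x p m * y b r)
            = c.utility x p m * ∑ r : c.R, ∑ b ∈ c.Groups.filter (fun b => m ∈ b), y b r := by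
          rw [Finset.mul_sum]
          exact Finset.sum_congr rfl fun r _ => (Finset.mul_sum _ _ _).symm
        rw [hpull]
        exact mul_le_of_le_one_right (hIR m) (hym m)
    _ = c.welfare x := hW1.symm

end CarpoolMarket

namespace CarpoolMarket

variable (c : CarpoolMarket)

/-- index type of the LP relaxation, viewed as an abstract linear program -/
abbrev Idx (c : CarpoolMarket) : Type := {b // b ∈ c.Groups} × c.R

/-- constraint matrix of the LP relaxation -/
def dualA (c : CarpoolMarket) : (c.M ⊕ c.E) → c.Idx → ℝ :=
  Sum.elim (fun m i => if m ∈ i.1.1 then 1 else 0)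
    (fun e i => if e ∈ c.edges i.2 then 1 else 0)

/-- right-hand sides of the LP relaxation -/
def dualb (c : CarpoolMarket) : (c.M ⊕ c.E) → ℝ :=
  Sum.elim (fun _ => 1) (fun e => (c.q e : ℝ))

/-- objective of the LP relaxation -/
def dualc (c : CarpoolMarket) : c.Idx → ℝ := fun i => c.V i.1.1 i.2

lemma equilibrium_backward (x : Finset c.M → c.R → ℝ) (hLP : c.LPOptimal x)
    (hbin : c.IsBinary x) : ∃ p τ, c.IsEquilibrium x p τ := by
  obtain ⟨⟨hx0, hxG, hxm, hxe⟩, hoptim⟩ := hLP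
  letI : DecidableEq c.Idx := Classical.decEq _
  letI : DecidableEq (c.M ⊕ c.E) := Classical.decEq _
  set x' : c.Idx → ℝ := fun i => x i.1.1 i.2 with hx'def
  have hlinkx : ∀ (b : {b // b ∈ c.Groups}) (r : c.R), x b.1 r = x' (b, r) := fun b r => rfl
  have hx0' : ∀ i, 0 ≤ x' i := fun i => hx0 _ _
  have hxf' : ∀ k, (∑ i : c.Idx, c.dualA k i * x' i) ≤ c.dualb k := by
    rintro (m | e)
    · show (∑ i : c.Idx, c.dualA (Sum.inl m) i * x' i) ≤ 1
      calc (∑ i : c.Idx, c.dualA (Sum.inl m) i * x' i)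
          = ∑ i : c.Idx, (if m ∈ i.1.1 then (1:ℝ) else 0) * x' i :=
            Finset.sum_congr rfl fun i _ => rfl
        _ = ∑ r : c.R, ∑ b ∈ c.Groups.filter (fun b => m ∈ b), x b r := c.T1 x' x hlinkx m
        _ ≤ 1 := hxm m
    · show (∑ i : c.Idx, c.dualA (Sum.inr e) i * x' i) ≤ (c.q e : ℝ)
      calc (∑ i : c.Idx, c.dualA (Sum.inr e) i * x' i)
          = ∑ i : c.Idx, (if e ∈ c.edges i.2 then (1:ℝ) else 0) * x' i :=
            Finset.sum_congr rfl fun i _ => rfl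
        _ = c.edgeLoad x e := c.T2 x' x hlinkx e
        _ ≤ (c.q e : ℝ) := hxe e
  have hopt' : ∀ z' : c.Idx → ℝ, (∀ i, 0 ≤ z' i) →
      (∀ k, (∑ i : c.Idx, c.dualA k i * z' i) ≤ c.dualb k) →
      (∑ i : c.Idx, c.dualc i * z' i) ≤ ∑ i : c.Idx, c.dualc i * x' i := by
    intro z' hz0 hzf
    set z : Finset c.M → c.R → ℝ :=
      fun b r => if h : b ∈ c.Groups then z' (⟨b, h⟩, r) else 0 with hzdef
    have hlinkz : ∀ (b : {b // b ∈ c.Groups}) (r : c.R), z b.1 r = z' (b, r) := by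
      intro b r
      simp only [hzdef]
      rw [dif_pos b.2]
    have hzG : ∀ b r, b ∉ c.Groups → z b r = 0 := by
      intro b r hb
      simp only [hzdef]
      rw [dif_neg hb]
    have hz0' : ∀ b r, 0 ≤ z b r := by
      intro b r
      simp only [hzdef]
      by_cases h : b ∈ c.Groups
      · rw [dif_pos h]; exact hz0 _
      · rw [dif_neg h]
    have hzm : ∀ m : c.M,
        (∑ r : c.R, ∑ b ∈ c.Groups.filter (fun b => m ∈ b), z b r) ≤ 1 := by
      intro m
      rw [← c.T1 z' z hlinkz m]
      exact hzf (Sum.inl m)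
    have hze : ∀ e : c.E, c.edgeLoad z e ≤ (c.q e : ℝ) := by
      intro e
      rw [← c.T2 z' z hlinkz e]
      exact hzf (Sum.inr e)
    calc (∑ i : c.Idx, c.dualc i * z' i)
        = c.welfare z := c.T3 z' z hlinkz
      _ ≤ c.welfare x := hoptim z ⟨hz0', hzG, hzm, hze⟩
      _ = ∑ i : c.Idx, c.dualc i * x' i := (c.T3 x' x hlinkx).symm
  obtain ⟨y, hy0, hyfeas, hybound⟩ := lp_duality c.dualA c.dualb c.dualc x' hx0' hxf' hopt'
  set u : c.M → ℝ := fun m => y (Sum.inl m) with hudef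
  set τ : c.E → ℝ := fun e => y (Sum.inr e) with hτdef
  -- dual feasibility, in market terms
  have hdualf : ∀ b ∈ c.Groups, ∀ r : c.R,
      c.V b r ≤ (∑ m ∈ b, u m) + c.routeToll τ r := by
    intro b hb r
    have h := hyfeas (⟨b, hb⟩, r)
    simp only [Fintype.sum_sum_type] at h
    have hM : (∑ m : c.M, y (Sum.inl m) * c.dualA (Sum.inl m) (⟨b, hb⟩, r))
        = ∑ m ∈ b, u m := by
      have h1 : ∀ m : c.M, y (Sum.inl m) * c.dualA (Sum.inl m) (⟨b, hb⟩, r)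
          = if m ∈ b then u m else 0 := by
        intro m
        show y (Sum.inl m) * (if m ∈ b then (1:ℝ) else 0) = _
        by_cases hm : m ∈ b
        · rw [if_pos hm, if_pos hm, mul_one, hudef]
        · rw [if_neg hm, if_neg hm, mul_zero]
      rw [Finset.sum_congr rfl fun m _ => h1 m, Finset.sum_ite_mem, Finset.univ_inter]
    have hE : (∑ e : c.E, y (Sum.inr e) * c.dualA (Sum.inr e) (⟨b, hb⟩, r))
        = c.routeToll τ r := by
      have h1 : ∀ e : c.E, y (Sum.inr e) * c.dualA (Sum.inr e) (⟨b, hb⟩, r)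
          = if e ∈ c.edges r then τ e else 0 := by
        intro e
        show y (Sum.inr e) * (if e ∈ c.edges r then (1:ℝ) else 0) = _
        by_cases he : e ∈ c.edges r
        · rw [if_pos he, if_pos he, mul_one, hτdef]
        · rw [if_neg he, if_neg he, mul_zero]
      rw [Finset.sum_congr rfl fun e _ => h1 e, Finset.sum_ite_mem, Finset.univ_inter,
        routeToll]
    rw [hM, hE] at h
    exact h
  -- dual objective bound, in market terms
  have hbound : (∑ m : c.M, u m) + (∑ e : c.E, τ e * (c.q e : ℝ)) ≤ c.welfare x := by
    have h := hybound
    simp only [Fintype.sum_sum_type] at h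
    have h1 : (∑ m : c.M, y (Sum.inl m) * c.dualb (Sum.inl m)) = ∑ m : c.M, u m :=
      Finset.sum_congr rfl fun m _ => by
        show y (Sum.inl m) * 1 = u m
        rw [mul_one, hudef]
    have h2 : (∑ e : c.E, y (Sum.inr e) * c.dualb (Sum.inr e))
        = ∑ e : c.E, τ e * (c.q e : ℝ) :=
      Finset.sum_congr rfl fun e _ => by
        show y (Sum.inr e) * (c.q e : ℝ) = τ e * (c.q e : ℝ)
        rw [hτdef]
    rw [h1, h2, show (∑ i : c.Idx, c.dualc i * x' i) = c.welfare x from c.T3 x' x hlinkx] at h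
    exact h
  -- complementary slackness
  have hS12 : c.welfare x
      ≤ ∑ b ∈ c.Groups, ∑ r : c.R, ((∑ m ∈ b, u m) + c.routeToll τ r) * x b r := by
    refine Finset.sum_le_sum fun b hb => Finset.sum_le_sum fun r _ => ?_
    exact mul_le_mul_of_nonneg_right (hdualf b hb r) (hx0 b r)
  have hS23 : (∑ b ∈ c.Groups, ∑ r : c.R, ((∑ m ∈ b, u m) + c.routeToll τ r) * x b r)
      = (∑ m : c.M, u m * (∑ r : c.R, ∑ b ∈ c.Groups.filter (fun b => m ∈ b), x b r))
        + ∑ e : c.E, τ e * c.edgeLoad x e := by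
    calc (∑ b ∈ c.Groups, ∑ r : c.R, ((∑ m ∈ b, u m) + c.routeToll τ r) * x b r)
        = (∑ b ∈ c.Groups, ∑ r : c.R, (∑ m ∈ b, u m) * x b r)
          + ∑ b ∈ c.Groups, ∑ r : c.R, c.routeToll τ r * x b r := by
          rw [← Finset.sum_add_distrib]
          refine Finset.sum_congr rfl fun b _ => ?_
          rw [← Finset.sum_add_distrib]
          exact Finset.sum_congr rfl fun r _ => add_mul _ _ _
      _ = (∑ m : c.M, ∑ r : c.R, ∑ b ∈ c.Groups.filter (fun b => m ∈ b), u m * x b r)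
          + ∑ e : c.E, τ e * c.edgeLoad x e := by
          rw [c.sum_group_swap (fun m _ _ => u m) x, c.sum_toll_swap τ x]
      _ = _ := by
          congr 1
          refine Finset.sum_congr rfl fun m _ => ?_
          rw [Finset.mul_sum]
          exact Finset.sum_congr rfl fun r _ => (Finset.mul_sum _ _ _).symm
  have h3m : ∀ m ∈ Finset.univ (α := c.M),
      u m * (∑ r : c.R, ∑ b ∈ c.Groups.filter (fun b => m ∈ b), x b r) ≤ u m :=
    fun m _ => mul_le_of_le_one_right (hy0 (Sum.inl m)) (hxm m)
  have h3e : ∀ e ∈ Finset.univ (α := c.E), τ e * c.edgeLoad x e ≤ τ e * (c.q e : ℝ) :=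
    fun e _ => mul_le_mul_of_nonneg_left (hxe e) (hy0 (Sum.inr e))
  have hSm_le := Finset.sum_le_sum h3m
  have hSe_le := Finset.sum_le_sum h3e
  have hSm_eq : (∑ m : c.M,
      u m * (∑ r : c.R, ∑ b ∈ c.Groups.filter (fun b => m ∈ b), x b r)) = ∑ m : c.M, u m := by
    linarith
  have hSe_eq : (∑ e : c.E, τ e * c.edgeLoad x e) = ∑ e : c.E, τ e * (c.q e : ℝ) := by
    linarith
  have hWS2 : c.welfare x
      = ∑ b ∈ c.Groups, ∑ r : c.R, ((∑ m ∈ b, u m) + c.routeToll τ r) * x b r := by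
    linarith
  have equ : ∀ m : c.M,
      u m * (∑ r : c.R, ∑ b ∈ c.Groups.filter (fun b => m ∈ b), x b r) = u m :=
    fun m => (Finset.sum_eq_sum_iff_of_le h3m).mp hSm_eq m (Finset.mem_univ m)
  have eqτ : ∀ e : c.E, τ e * c.edgeLoad x e = τ e * (c.q e : ℝ) :=
    fun e => (Finset.sum_eq_sum_iff_of_le h3e).mp hSe_eq e (Finset.mem_univ e)
  have eqVm : ∀ b ∈ c.Groups, ∀ r : c.R,
      c.V b r * x b r = ((∑ m ∈ b, u m) + c.routeToll τ r) * x b r := by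
    have hb1 : ∀ b ∈ c.Groups, (∑ r : c.R, c.V b r * x b r)
        ≤ ∑ r : c.R, ((∑ m ∈ b, u m) + c.routeToll τ r) * x b r := fun b hb =>
      Finset.sum_le_sum fun r _ =>
        mul_le_mul_of_nonneg_right (hdualf b hb r) (hx0 b r)
    have houter := (Finset.sum_eq_sum_iff_of_le hb1).mp hWS2
    intro b hb r
    exact (Finset.sum_eq_sum_iff_of_le fun r _ =>
      mul_le_mul_of_nonneg_right (hdualf b hb r) (hx0 b r)).mp (houter b hb) r
      (Finset.mem_univ r)
  have CS1 : ∀ b ∈ c.Groups, ∀ r : c.R, x b r = 1 →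
      c.V b r = (∑ m ∈ b, u m) + c.routeToll τ r := by
    intro b hb r hx1
    have := eqVm b hb r
    rw [hx1, mul_one, mul_one] at this
    exact this
  -- payments
  set p : c.M → ℝ := fun m =>
    (∑ r : c.R, ∑ b ∈ c.Groups.filter (fun b => m ∈ b), c.riderValue m b r * x b r) - u m
    with hpdef
  have hutil : ∀ m : c.M, c.utility x p m = u m := by
    intro m
    simp only [utility, hpdef]
    ring
  refine ⟨p, τ, ⟨hbin, hx0, hxG, hxm, hxe⟩, fun e => hy0 (Sum.inr e), ?_, ?_, ?_, ?_, ?_⟩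
  · -- individual rationality
    intro m
    rw [hutil m]
    exact hy0 (Sum.inl m)
  · -- stability
    intro b hb r
    rw [Finset.sum_congr rfl fun m _ => hutil m]
    have := hdualf b hb r
    linarith
  · -- budget balance
    intro b hb r hx1
    have hval : ∀ m ∈ b,
        (∑ r' : c.R, ∑ b' ∈ c.Groups.filter (fun b => m ∈ b), c.riderValue m b' r' * x b' r')
          = c.riderValue m b r := fun m hm =>
      c.sum_over_trips hbin hxm hxG hm hb hx1 (fun b' r' => c.riderValue m b' r')
    have hsum1 : ∑ m ∈ b, p m = (∑ m ∈ b, c.riderValue m b r) - ∑ m ∈ b, u m := by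
      rw [← Finset.sum_sub_distrib]
      refine Finset.sum_congr rfl fun m hm => ?_
      simp only [hpdef]
      rw [hval m hm]
    have hsum2 : (∑ m ∈ b, c.riderValue m b r) = c.V b r + c.tripCost b r := by
      rw [V]; ring
    have hsum3 : (∑ m ∈ b, u m) = c.V b r - c.routeToll τ r := by
      have := CS1 b hb r hx1
      linarith
    rw [hsum1, hsum2, hsum3]
    ring
  · -- free riders pay nothing
    intro m hnone
    have hride0 : (∑ r : c.R, ∑ b ∈ c.Groups.filter (fun b => m ∈ b), x b r) = 0 :=
      Finset.sum_eq_zero fun r _ =>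
        Finset.sum_eq_zero fun b hb => hnone b r (Finset.mem_filter.1 hb).2
    have hu0 : u m = 0 := by
      have := equ m
      rw [hride0, mul_zero] at this
      exact this.symm
    have hval0 : (∑ r : c.R, ∑ b ∈ c.Groups.filter (fun b => m ∈ b),
        c.riderValue m b r * x b r) = 0 :=
      Finset.sum_eq_zero fun r _ => Finset.sum_eq_zero fun b hb => by
        rw [hnone b r (Finset.mem_filter.1 hb).2, mul_zero]
    simp only [hpdef]
    rw [hval0, hu0, sub_zero]
  · -- market clearing
    intro e hlt
    by_contra hτne
    have hload := mul_left_cancel₀ hτne (eqτ e)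
    linarith

end CarpoolMarket

/-- A market equilibrium `(x*, p*, τ*)` exists if and only if the linear
program (LP) has an optimal solution all of whose entries lie in `{0,1}`. -/
theorem equilibrium_exists_iff_LP_has_binary_optimum (c : CarpoolMarket) :
    (∃ x p τ, c.IsEquilibrium x p τ) ↔ ∃ x, c.LPOptimal x ∧ c.IsBinary x := by
  constructor
  · rintro ⟨x, p, τ, h⟩
    exact ⟨x, c.equilibrium_forward h⟩
  · rintro ⟨x, hopt, hbin⟩
    obtain ⟨p, τ, h⟩ := c.equilibrium_backward x hopt hbin
    exact ⟨x, p, τ, h⟩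
end
end

section
/- If x* is an optimal {0,1}-valued solution of the linear program (LP) and (u*, τ*) is an optimal solution of its dual (D), then setting p*^m = Σ_r Σ_{b∋m} x*_r(b)·v_r^m(b) − u*^m for each rider m makes (x*, p*, τ*) a market equilibrium. Conversely, for any market equilibrium (x*, p*, τ*), the trip vector x* is an optimal solution of (LP) and the pair (u*, τ*), where u* is the induced utility vector, is an optimal solution of (D). -/
open Classical
noncomputable section

section Duality

open Classical in
/-- The cone of nonnegative combinations of a finite family of vectors. -/
noncomputable def coneOf {n J : Type} [Fintype n] [Fintype J] (g : J → EuclideanSpace ℝ n) :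
    Set (EuclideanSpace ℝ n) :=
  { x | ∃ c : J → ℝ, (∀ j, 0 ≤ c j) ∧ ∑ j, c j • g j = x }

open Finset in
lemma caratheodory_cone {n J : Type} [Fintype n] [Fintype J] [DecidableEq J]
    (g : J → EuclideanSpace ℝ n) (S : Finset J) :
    ∀ (c : J → ℝ), (∀ j, 0 ≤ c j) → (∀ j ∉ S, c j = 0) →
      ∃ (T : Finset J) (d : J → ℝ), (∀ j, 0 ≤ d j) ∧ (∀ j ∉ T, d j = 0) ∧
        (∑ j, d j • g j = ∑ j, c j • g j) ∧ LinearIndependent ℝ (fun j : T => g j) := by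
  induction S using Finset.strongInduction with
  | _ S ih =>
    intro c hc hsupp
    by_cases hli : LinearIndependent ℝ (fun j : S => g j)
    · exact ⟨S, c, hc, hsupp, rfl, hli⟩
    · -- extract a nontrivial relation supported on S
      obtain ⟨d0, hd0sum, i0, hi0⟩ := Fintype.not_linearIndependent_iff.mp hli
      classical
      set D0 : J → ℝ := fun j => if h : j ∈ S then d0 ⟨j, h⟩ else 0 with hD0
      have hD0supp : ∀ j ∉ S, D0 j = 0 := by intro j hj; simp [hD0, hj]
      have hD0sum : ∑ j, D0 j • g j = 0 := by
        rw [← Finset.sum_subset (Finset.subset_univ S)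
          (by intro j _ hj; rw [hD0supp j hj, zero_smul])]
        rw [← Finset.sum_attach S (fun j => D0 j • g j)]
        have : ∀ i : S, D0 i.1 • g i.1 = d0 i • g i.1 := by
          intro i; simp [hD0, i.2]
        rw [Finset.sum_congr rfl (fun i _ => this i)]
        simpa using hd0sum
      have hD0ne : ∃ j ∈ S, D0 j ≠ 0 := ⟨i0.1, i0.2, by simpa [hD0, i0.2] using hi0⟩
      -- WLOG some coordinate is positive
      obtain ⟨D, hDsupp, hDsum, j0, hj0S, hj0pos⟩ :
          ∃ D : J → ℝ, (∀ j ∉ S, D j = 0) ∧ (∑ j, D j • g j = 0) ∧ ∃ j0 ∈ S, 0 < D j0 := by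
        obtain ⟨j, hjS, hjne⟩ := hD0ne
        rcases lt_or_gt_of_ne hjne with hneg | hpos
        · refine ⟨-D0, fun j hj => by simp [hD0supp j hj], ?_, j, hjS, by simpa using hneg⟩
          simp only [Pi.neg_apply, neg_smul, Finset.sum_neg_distrib, hD0sum, neg_zero]
        · exact ⟨D0, hD0supp, hD0sum, j, hjS, hpos⟩
      -- minimal ratio
      obtain ⟨j1, hj1mem, hj1min⟩ := Finset.exists_min_image (S.filter (fun j => 0 < D j))
        (fun j => c j / D j) ⟨j0, Finset.mem_filter.mpr ⟨hj0S, hj0pos⟩⟩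
      rw [Finset.mem_filter] at hj1mem
      obtain ⟨hj1S, hj1pos⟩ := hj1mem
      set t : ℝ := c j1 / D j1 with ht
      have ht0 : 0 ≤ t := div_nonneg (hc j1) hj1pos.le
      set c' : J → ℝ := fun j => c j - t * D j with hc'
      have hc'0 : ∀ j, 0 ≤ c' j := by
        intro j
        by_cases hjS : j ∈ S
        · by_cases hDj : 0 < D j
          · have hmin := hj1min j (Finset.mem_filter.mpr ⟨hjS, hDj⟩)
            have : t * D j ≤ c j := (le_div_iff₀ hDj).mp hmin
            simp only [hc']; linarith
          · push_neg at hDj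
            have : t * D j ≤ 0 := mul_nonpos_of_nonneg_of_nonpos ht0 hDj
            simp [hc']; nlinarith [hc j]
        · simp [hc', hDsupp j hjS, hsupp j hjS]
      have hc'supp : ∀ j ∉ S.erase j1, c' j = 0 := by
        intro j hj
        by_cases hjj : j = j1
        · subst hjj
          have hne : D j ≠ 0 := ne_of_gt hj1pos
          simp only [hc', ht]
          field_simp
          simp
        · have hjS : j ∉ S := fun hS => hj (Finset.mem_erase.mpr ⟨hjj, hS⟩)
          simp [hc', hsupp j hjS, hDsupp j hjS]
      have hc'sum : ∑ j, c' j • g j = ∑ j, c j • g j := by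
        simp only [hc', sub_smul, mul_smul, Finset.sum_sub_distrib]
        rw [← Finset.smul_sum, hDsum, smul_zero, sub_zero]
      obtain ⟨T, d, h1, h2, h3, h4⟩ := ih (S.erase j1) (Finset.erase_ssubset hj1S) c' hc'0 hc'supp
      exact ⟨T, d, h1, h2, h3.trans hc'sum, h4⟩

open Finset in
/-- The linear map sending coefficients on `T` to the corresponding combination. -/
noncomputable def combMap {n J : Type} [Fintype n] [Fintype J]
    (g : J → EuclideanSpace ℝ n) (T : Finset J) : (T → ℝ) →ₗ[ℝ] EuclideanSpace ℝ n where
  toFun := fun c => ∑ j : T, c j • g j.1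
  map_add' := by intro a b; simp [add_smul, Finset.sum_add_distrib]
  map_smul' := by intro t a; simp [mul_smul, Finset.smul_sum]

lemma isClosed_coneOf {n J : Type} [Fintype n] [Fintype J] [DecidableEq J]
    (g : J → EuclideanSpace ℝ n) : IsClosed (coneOf g) := by
  classical
  have key : coneOf g = ⋃ T : Finset J,
      (if LinearIndependent ℝ (fun j : T => g j.1) then
        combMap g T '' {c : T → ℝ | ∀ j, 0 ≤ c j} else ∅) := by
    ext x
    constructor
    · rintro ⟨c, hc, hsum⟩
      obtain ⟨T, d, hd0, hdsupp, hdsum, hli⟩ :=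
        caratheodory_cone g Finset.univ c hc (by simp)
      refine Set.mem_iUnion.mpr ⟨T, ?_⟩
      rw [if_pos hli]
      refine ⟨fun j => d j.1, fun j => hd0 j.1, ?_⟩
      show ∑ j : T, d j.1 • g j.1 = x
      rw [Finset.sum_coe_sort T (fun j => d j • g j)]
      rw [Finset.sum_subset (Finset.subset_univ T)
        (by intro j _ hj; rw [hdsupp j hj, zero_smul])]
      rw [hdsum, hsum]
    · intro hx
      obtain ⟨T, hT⟩ := Set.mem_iUnion.mp hx
      by_cases hli : LinearIndependent ℝ (fun j : T => g j.1)
      · rw [if_pos hli] at hT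
        obtain ⟨c, hc, hsum⟩ := hT
        refine ⟨fun j => if h : j ∈ T then c ⟨j, h⟩ else 0, ?_, ?_⟩
        · intro j
          by_cases h : j ∈ T
          · simp only [dif_pos h]; exact hc ⟨j, h⟩
          · simp [h]
        · rw [← Finset.sum_subset (Finset.subset_univ T)
            (by intro j _ hj; simp [hj])]
          rw [← Finset.sum_attach T (fun j => (if h : j ∈ T then c ⟨j, h⟩ else 0) • g j)]
          rw [← hsum]
          show _ = ∑ j : T, c j • g j.1
          exact Finset.sum_congr rfl (fun j _ => by rw [dif_pos j.2])
      · rw [if_neg hli] at hT; exact absurd hT (Set.notMem_empty x)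
  rw [key]
  apply isClosed_iUnion_of_finite
  intro T
  by_cases hli : LinearIndependent ℝ (fun j : T => g j.1)
  · rw [if_pos hli]
    have hker : LinearMap.ker (combMap g T) = ⊥ := by
      rw [LinearMap.ker_eq_bot']
      intro c hc
      exact funext (Fintype.linearIndependent_iff.mp hli c hc)
    have hemb := LinearMap.isClosedEmbedding_of_injective hker
    apply hemb.isClosedMap
    have : {c : T → ℝ | ∀ j, 0 ≤ c j} = Set.pi Set.univ (fun _ => Set.Ici (0:ℝ)) := by
      ext c; simp only [Set.mem_pi, Set.mem_univ, Set.mem_Ici, forall_true_left, Set.mem_setOf_eq, true_implies]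
    rw [this]
    exact isClosed_set_pi (fun i _ => isClosed_Ici)
  · rw [if_neg hli]; exact isClosed_empty

/-- `coneOf g` as a convex cone. -/
noncomputable def coneOfCone {n J : Type} [Fintype n] [Fintype J]
    (g : J → EuclideanSpace ℝ n) : ConvexCone ℝ (EuclideanSpace ℝ n) where
  carrier := coneOf g
  smul_mem' := by
    rintro t ht x ⟨c, hc, hsum⟩
    exact ⟨fun j => t * c j, fun j => mul_nonneg ht.le (hc j),
      by simp [mul_smul, ← Finset.smul_sum, hsum]⟩
  add_mem' := by
    rintro x ⟨c, hc, hcsum⟩ y ⟨d, hd, hdsum⟩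
    exact ⟨fun j => c j + d j, fun j => add_nonneg (hc j) (hd j),
      by simp [add_smul, Finset.sum_add_distrib, hcsum, hdsum]⟩

lemma zero_mem_coneOf {n J : Type} [Fintype n] [Fintype J] (g : J → EuclideanSpace ℝ n) :
    (0 : EuclideanSpace ℝ n) ∈ coneOf g :=
  ⟨fun _ => 0, fun _ => le_refl 0, by simp⟩

lemma gen_mem_coneOf {n J : Type} [Fintype n] [Fintype J] [DecidableEq J]
    (g : J → EuclideanSpace ℝ n) (j : J) : g j ∈ coneOf g :=
  ⟨fun j' => if j' = j then 1 else 0, fun j' => by by_cases h : j' = j <;> simp [h],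
    by simp [ite_smul]⟩

/-- Farkas' lemma for finitely generated cones in Euclidean space. -/
lemma farkas_alternative {n J : Type} [Fintype n] [Fintype J] [DecidableEq J]
    (g : J → EuclideanSpace ℝ n) (p : EuclideanSpace ℝ n) :
    p ∈ coneOf g ∨ ∃ z : EuclideanSpace ℝ n,
      (∀ j, 0 ≤ (inner ℝ (g j) z : ℝ)) ∧ (inner ℝ z p : ℝ) < 0 := by
  by_cases hp : p ∈ coneOf g
  · exact Or.inl hp
  · right
    obtain ⟨z, hz1, hz2⟩ :=
      ProperCone.hyperplane_separation' (C := {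
          carrier := coneOf g
          add_mem' := fun ha hb => (coneOfCone g).add_mem' ha hb
          zero_mem' := zero_mem_coneOf g
          smul_mem' := fun r x hx => (by
            obtain ⟨c, hc, hsum⟩ := hx
            refine ⟨fun j => r.1 * c j, fun j => mul_nonneg r.2 (hc j), ?_⟩
            rw [← hsum, Finset.smul_sum]
            exact Finset.sum_congr rfl (fun j _ => by rw [mul_smul]; rfl))
          isClosed' := isClosed_coneOf g }) hp
    exact ⟨z, fun j => hz1 (g j) (gen_mem_coneOf g j), by rw [real_inner_comm]; exact hz2⟩

open Finset in
/-- Strong LP duality (attainment form): if `xs` is an optimal solution of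
`max cc·x s.t. x ≥ 0, A x ≤ bb`, then there is a feasible dual solution whose
objective value is at most the primal optimum. -/
lemma lp_strong_duality {ι κ : Type} [Fintype ι] [Fintype κ] [DecidableEq ι] [DecidableEq κ]
    (A : κ → ι → ℝ) (bb : κ → ℝ) (cc : ι → ℝ) (xs : ι → ℝ)
    (hx0 : ∀ i, 0 ≤ xs i) (hxA : ∀ k, ∑ i, A k i * xs i ≤ bb k)
    (hopt : ∀ x : ι → ℝ, (∀ i, 0 ≤ x i) → (∀ k, ∑ i, A k i * x i ≤ bb k) →
      ∑ i, cc i * x i ≤ ∑ i, cc i * xs i) :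
    ∃ y : κ → ℝ, (∀ k, 0 ≤ y k) ∧ (∀ i, cc i ≤ ∑ k, y k * A k i) ∧
      ∑ k, y k * bb k ≤ ∑ i, cc i * xs i := by
  classical
  set v0 : ℝ := ∑ i, cc i * xs i with hv0
  set toE : ((ι ⊕ Unit) → ℝ) → EuclideanSpace ℝ (ι ⊕ Unit) :=
    fun f => (WithLp.equiv 2 ((ι ⊕ Unit) → ℝ)).symm f with htoE
  set G : (κ ⊕ ι ⊕ Unit) → (ι ⊕ Unit) → ℝ := fun j =>
    Sum.elim (fun k => Sum.elim (fun i => A k i) (fun _ => bb k))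
      (Sum.elim
        (fun i => Sum.elim (fun i' => if i' = i then (-1:ℝ) else 0) (fun _ => 0))
        (fun _ => Sum.elim (fun _ => (0:ℝ)) (fun _ => 1))) j with hG
  set P : (ι ⊕ Unit) → ℝ := Sum.elim cc (fun _ => v0) with hP
  have key : ∀ (f : (ι ⊕ Unit) → ℝ) (w : ι ⊕ Unit),
      (inner ℝ (EuclideanSpace.single w (1:ℝ)) (toE f) : ℝ) = f w := by
    intro f w
    rw [EuclideanSpace.inner_single_left]
    simp [htoE]
  rcases farkas_alternative (fun j => toE (G j)) (toE P) with hmem | ⟨z, hz1, hz2⟩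
  · -- extract the dual solution from the cone membership
    obtain ⟨c, hc, hsum⟩ := hmem
    have hcoord : ∀ w : ι ⊕ Unit, ∑ j, c j * G j w = P w := by
      intro w
      have := congrArg (fun v => (inner ℝ (EuclideanSpace.single w (1:ℝ)) v : ℝ)) hsum
      simpa only [inner_sum, real_inner_smul_right, key] using this
    refine ⟨fun k => c (Sum.inl k), fun k => hc _, ?_, ?_⟩
    · intro i
      show cc i ≤ ∑ k : κ, c (Sum.inl k) * A k i
      have h := hcoord (Sum.inl i)
      rw [Fintype.sum_sum_type, Fintype.sum_sum_type] at h
      simp only [hG, Sum.elim_inl, Sum.elim_inr, hP, mul_zero, mul_one,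
        Finset.sum_const_zero, add_zero, zero_add, Finset.univ_unique,
        Finset.sum_singleton] at h
      have hsimp : ∑ i' : ι, c (Sum.inr (Sum.inl i')) *
          (if i = i' then (-1:ℝ) else 0) = -c (Sum.inr (Sum.inl i)) := by
        rw [Finset.sum_eq_single_of_mem i (Finset.mem_univ i)]
        · simp
        · intro b _ hb; simp [Ne.symm hb]
      rw [hsimp] at h
      have hnn := hc (Sum.inr (Sum.inl i))
      linarith
    · show ∑ k : κ, c (Sum.inl k) * bb k ≤ v0
      have h := hcoord (Sum.inr ())
      rw [Fintype.sum_sum_type, Fintype.sum_sum_type] at h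
      simp only [hG, Sum.elim_inl, Sum.elim_inr, hP, mul_zero, mul_one,
        Finset.sum_const_zero, add_zero, zero_add, Finset.univ_unique,
        Finset.sum_singleton] at h
      have hnn := hc (Sum.inr (Sum.inr ()))
      linarith
  · -- the separating hyperplane contradicts optimality of `xs`
    exfalso
    set Z : (ι ⊕ Unit) → ℝ := fun w => (inner ℝ (EuclideanSpace.single w (1:ℝ)) z : ℝ) with hZ
    have hzw : ∀ w, Z w = z w := by
      intro w; simp only [hZ]; rw [EuclideanSpace.inner_single_left]; simp
    have hinnerf : ∀ f : (ι ⊕ Unit) → ℝ, (inner ℝ (toE f) z : ℝ) = ∑ w, f w * Z w := by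
      intro f
      rw [PiLp.inner_apply]
      refine Finset.sum_congr rfl (fun w _ => ?_)
      rw [hzw w]
      simp [htoE, RCLike.inner_apply]
      ring
    have hinnerf' : (inner ℝ z (toE P) : ℝ) = ∑ w, P w * Z w := by
      rw [real_inner_comm]; exact hinnerf P
    set x : ι → ℝ := fun i => -Z (Sum.inl i) with hx
    set μ : ℝ := Z (Sum.inr ()) with hμ
    have cond2 : ∀ i, 0 ≤ x i := by
      intro i
      have h := hz1 (Sum.inr (Sum.inl i))
      rw [hinnerf, Fintype.sum_sum_type] at h
      simp only [hG, Sum.elim_inl, Sum.elim_inr, mul_zero, zero_mul, mul_one,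
        Finset.sum_const_zero, add_zero, zero_add, Finset.univ_unique,
        Finset.sum_singleton] at h
      have hsimp : ∑ i' : ι, (if i' = i then (-1:ℝ) else 0) * Z (Sum.inl i')
          = -Z (Sum.inl i) := by
        rw [Finset.sum_eq_single_of_mem i (Finset.mem_univ i)]
        · simp
        · intro b _ hb; simp [hb]
      rw [hsimp] at h
      show 0 ≤ -Z (Sum.inl i)
      linarith
    have cond3 : 0 ≤ μ := by
      have h := hz1 (Sum.inr (Sum.inr ()))
      rw [hinnerf, Fintype.sum_sum_type] at h
      simp only [hG, Sum.elim_inl, Sum.elim_inr, mul_zero, zero_mul, mul_one, one_mul,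
        Finset.sum_const_zero, add_zero, zero_add, Finset.univ_unique,
        Finset.sum_singleton] at h
      exact h
    have cond1 : ∀ k, ∑ i, A k i * x i ≤ bb k * μ := by
      intro k
      have h := hz1 (Sum.inl k)
      rw [hinnerf, Fintype.sum_sum_type] at h
      simp only [hG, Sum.elim_inl, Sum.elim_inr, Finset.univ_unique,
        Finset.sum_singleton] at h
      have : ∑ i, A k i * x i = -∑ i, A k i * Z (Sum.inl i) := by
        rw [← Finset.sum_neg_distrib]
        exact Finset.sum_congr rfl (fun i _ => by rw [hx]; ring)
      rw [this]
      linarith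
    have condneg : (∑ i, cc i * x i) > v0 * μ := by
      have h := hz2
      rw [hinnerf', Fintype.sum_sum_type] at h
      simp only [hP, Sum.elim_inl, Sum.elim_inr, Finset.univ_unique,
        Finset.sum_singleton] at h
      have : ∑ i, cc i * x i = -∑ i, cc i * Z (Sum.inl i) := by
        rw [← Finset.sum_neg_distrib]
        exact Finset.sum_congr rfl (fun i _ => by rw [hx]; ring)
      rw [this]
      linarith
    rcases eq_or_lt_of_le cond3 with hμ0 | hμpos
    · -- μ = 0 : unbounded direction
      have hxfeas : ∀ k, ∑ i, A k i * (xs i + x i) ≤ bb k := by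
        intro k
        have h1 := cond1 k
        rw [← hμ0, mul_zero] at h1
        have : ∑ i, A k i * (xs i + x i) = (∑ i, A k i * xs i) + ∑ i, A k i * x i := by
          rw [← Finset.sum_add_distrib]
          exact Finset.sum_congr rfl (fun i _ => by ring)
        rw [this]
        linarith [hxA k]
      have hval := hopt (fun i => xs i + x i) (fun i => add_nonneg (hx0 i) (cond2 i)) hxfeas
      have hexp : ∑ i, cc i * (xs i + x i) = v0 + ∑ i, cc i * x i := by
        rw [hv0, ← Finset.sum_add_distrib]
        exact Finset.sum_congr rfl (fun i _ => by ring)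
      rw [hexp] at hval
      rw [← hμ0, mul_zero] at condneg
      linarith
    · -- μ > 0 : rescale to beat the optimum
      have hxfeas : ∀ k, ∑ i, A k i * (x i / μ) ≤ bb k := by
        intro k
        have : ∑ i, A k i * (x i / μ) = (∑ i, A k i * x i) / μ := by
          rw [Finset.sum_div]
          exact Finset.sum_congr rfl (fun i _ => by ring)
        rw [this, div_le_iff₀ hμpos]
        linarith [cond1 k]
      have hval := hopt (fun i => x i / μ) (fun i => div_nonneg (cond2 i) cond3) hxfeas
      have hexp : ∑ i, cc i * (x i / μ) = (∑ i, cc i * x i) / μ := by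
        rw [Finset.sum_div]
        exact Finset.sum_congr rfl (fun i _ => by ring)
      rw [hexp] at hval
      rw [div_le_iff₀ hμpos] at hval
      nlinarith

end Duality

/-- The dual program (D): minimize `∑_m u^m + ∑_e q_e τ_e` subject to
`∑_{m∈b} u^m + ∑_{e∈r} τ_e ≥ V_r(b)` and `u, τ ≥ 0`. -/
def CarpoolMarket.DualFeasible (c : CarpoolMarket) (u : c.M → ℝ) (τ : c.E → ℝ) : Prop :=
  (∀ m, 0 ≤ u m) ∧ (∀ e, 0 ≤ τ e) ∧
  (∀ b ∈ c.Groups, ∀ r : c.R, c.V b r ≤ (∑ m ∈ b, u m) + c.routeToll τ r)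

/-- objective of the dual program (D) -/
def CarpoolMarket.dualObj (c : CarpoolMarket) (u : c.M → ℝ) (τ : c.E → ℝ) : ℝ :=
  (∑ m : c.M, u m) + ∑ e : c.E, (c.q e : ℝ) * τ e

/-- optimal solutions of the dual program (D) -/
def CarpoolMarket.DualOptimal (c : CarpoolMarket) (u : c.M → ℝ) (τ : c.E → ℝ) : Prop :=
  c.DualFeasible u τ ∧ ∀ u' τ', c.DualFeasible u' τ' → c.dualObj u τ ≤ c.dualObj u' τ'

section CarpoolLemmas

open Finset

variable {c : CarpoolMarket}

lemma OS_pull {γ : Type} (s : Finset γ) (P : Prop) [Decidable P] (h : γ → ℝ) :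
    (∑ i ∈ s, if P then h i else 0) = if P then ∑ i ∈ s, h i else 0 := by
  by_cases hP : P <;> simp [hP]

lemma OS_mem_sum {α : Type} [Fintype α] [DecidableEq α] (s : Finset α) (f : α → ℝ) :
    ∑ i ∈ s, f i = ∑ i : α, if i ∈ s then f i else 0 := by
  rw [Finset.sum_ite_mem, Finset.univ_inter]

/-- exchanging a sum over groups and their members -/
lemma OS_exchange_riders (c : CarpoolMarket) (f : Finset c.M → c.R → c.M → ℝ) :
    ∑ b ∈ c.Groups, ∑ r : c.R, ∑ m ∈ b, f b r m
      = ∑ m : c.M, ∑ r : c.R, ∑ b ∈ c.Groups.filter (fun b => m ∈ b), f b r m := by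
  have step1 : ∑ b ∈ c.Groups, ∑ r : c.R, ∑ m ∈ b, f b r m
      = ∑ b ∈ c.Groups, ∑ m : c.M, ∑ r : c.R, (if m ∈ b then f b r m else 0) := by
    refine Finset.sum_congr rfl (fun b _ => ?_)
    rw [Finset.sum_comm, OS_mem_sum b (fun m => ∑ r : c.R, f b r m)]
    refine Finset.sum_congr rfl (fun m _ => ?_)
    exact (OS_pull Finset.univ (m ∈ b) (fun r => f b r m)).symm
  rw [step1, Finset.sum_comm]
  refine Finset.sum_congr rfl (fun m _ => ?_)
  rw [Finset.sum_comm]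
  refine Finset.sum_congr rfl (fun r _ => ?_)
  rw [Finset.sum_filter]

/-- exchanging a sum over routes and their edges -/
lemma OS_exchange_edges (c : CarpoolMarket) (f : Finset c.M → c.R → c.E → ℝ) :
    ∑ b ∈ c.Groups, ∑ r : c.R, ∑ e ∈ c.edges r, f b r e
      = ∑ e : c.E, ∑ r ∈ Finset.univ.filter (fun r => e ∈ c.edges r),
          ∑ b ∈ c.Groups, f b r e := by
  have step1 : ∑ b ∈ c.Groups, ∑ r : c.R, ∑ e ∈ c.edges r, f b r e
      = ∑ r : c.R, ∑ e : c.E, ∑ b ∈ c.Groups, (if e ∈ c.edges r then f b r e else 0) := by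
    rw [Finset.sum_comm]
    refine Finset.sum_congr rfl (fun r _ => ?_)
    have h0 : ∑ b ∈ c.Groups, ∑ e ∈ c.edges r, f b r e
        = ∑ b ∈ c.Groups, ∑ e : c.E, (if e ∈ c.edges r then f b r e else 0) :=
      Finset.sum_congr rfl (fun b _ => OS_mem_sum (c.edges r) (fun e => f b r e))
    rw [h0, Finset.sum_comm]
  rw [step1, Finset.sum_comm]
  refine Finset.sum_congr rfl (fun e _ => ?_)
  rw [Finset.sum_filter]
  refine Finset.sum_congr rfl (fun r _ => ?_)
  exact (OS_pull c.Groups (e ∈ c.edges r) (fun b => f b r e))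

/-- the fundamental "gap" identity between the dual and the primal objective -/
lemma OS_gap (c : CarpoolMarket) (x : Finset c.M → c.R → ℝ) (u : c.M → ℝ) (τ : c.E → ℝ) :
    c.dualObj u τ - c.welfare x
      = (∑ b ∈ c.Groups, ∑ r : c.R,
          ((∑ m ∈ b, u m) + c.routeToll τ r - c.V b r) * x b r)
        + (∑ m : c.M, u m *
            (1 - ∑ r : c.R, ∑ b ∈ c.Groups.filter (fun b => m ∈ b), x b r))
        + (∑ e : c.E, τ e * ((c.q e : ℝ) - c.edgeLoad x e)) := by
  have h1 : ∑ b ∈ c.Groups, ∑ r : c.R, (∑ m ∈ b, u m) * x b r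
      = ∑ m : c.M, u m * ∑ r : c.R, ∑ b ∈ c.Groups.filter (fun b => m ∈ b), x b r := by
    have he := OS_exchange_riders c (fun b r m => u m * x b r)
    calc ∑ b ∈ c.Groups, ∑ r : c.R, (∑ m ∈ b, u m) * x b r
        = ∑ b ∈ c.Groups, ∑ r : c.R, ∑ m ∈ b, u m * x b r := by
          refine Finset.sum_congr rfl (fun b _ => Finset.sum_congr rfl (fun r _ => ?_))
          rw [Finset.sum_mul]
      _ = ∑ m : c.M, ∑ r : c.R, ∑ b ∈ c.Groups.filter (fun b => m ∈ b), u m * x b r := he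
      _ = ∑ m : c.M, u m * ∑ r : c.R, ∑ b ∈ c.Groups.filter (fun b => m ∈ b), x b r := by
          refine Finset.sum_congr rfl (fun m _ => ?_)
          rw [Finset.mul_sum]
          refine Finset.sum_congr rfl (fun r _ => ?_)
          rw [Finset.mul_sum]
  have h2 : ∑ b ∈ c.Groups, ∑ r : c.R, c.routeToll τ r * x b r
      = ∑ e : c.E, τ e * c.edgeLoad x e := by
    have he := OS_exchange_edges c (fun b r e => τ e * x b r)
    calc ∑ b ∈ c.Groups, ∑ r : c.R, c.routeToll τ r * x b r
        = ∑ b ∈ c.Groups, ∑ r : c.R, ∑ e ∈ c.edges r, τ e * x b r := by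
          refine Finset.sum_congr rfl (fun b _ => Finset.sum_congr rfl (fun r _ => ?_))
          rw [CarpoolMarket.routeToll, Finset.sum_mul]
      _ = ∑ e : c.E, ∑ r ∈ Finset.univ.filter (fun r => e ∈ c.edges r),
            ∑ b ∈ c.Groups, τ e * x b r := he
      _ = ∑ e : c.E, τ e * c.edgeLoad x e := by
          refine Finset.sum_congr rfl (fun e _ => ?_)
          rw [CarpoolMarket.edgeLoad, Finset.mul_sum]
          refine Finset.sum_congr rfl (fun r _ => ?_)
          rw [Finset.mul_sum]
  have hexp : ∑ b ∈ c.Groups, ∑ r : c.R,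
      ((∑ m ∈ b, u m) + c.routeToll τ r - c.V b r) * x b r
      = (∑ b ∈ c.Groups, ∑ r : c.R, (∑ m ∈ b, u m) * x b r)
        + (∑ b ∈ c.Groups, ∑ r : c.R, c.routeToll τ r * x b r)
        - (∑ b ∈ c.Groups, ∑ r : c.R, c.V b r * x b r) := by
    simp only [sub_mul, add_mul, Finset.sum_sub_distrib, Finset.sum_add_distrib]
  have hu : ∑ m : c.M, u m *
      (1 - ∑ r : c.R, ∑ b ∈ c.Groups.filter (fun b => m ∈ b), x b r)
      = (∑ m : c.M, u m)
        - ∑ m : c.M, u m * ∑ r : c.R, ∑ b ∈ c.Groups.filter (fun b => m ∈ b), x b r := by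
    simp only [mul_sub, mul_one, Finset.sum_sub_distrib]
  have hτ : ∑ e : c.E, τ e * ((c.q e : ℝ) - c.edgeLoad x e)
      = (∑ e : c.E, (c.q e : ℝ) * τ e) - ∑ e : c.E, τ e * c.edgeLoad x e := by
    simp only [mul_sub, Finset.sum_sub_distrib]
    congr 1
    exact Finset.sum_congr rfl (fun e _ => mul_comm _ _)
  rw [hexp, h1, h2, hu, hτ, CarpoolMarket.dualObj, CarpoolMarket.welfare]
  ring

/-- weak duality -/
lemma OS_weak (c : CarpoolMarket) (x : Finset c.M → c.R → ℝ) (u : c.M → ℝ) (τ : c.E → ℝ)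
    (hx : c.LPFeasible x) (hd : c.DualFeasible u τ) : c.welfare x ≤ c.dualObj u τ := by
  obtain ⟨hx0, hxsupp, hxrow, hxedge⟩ := hx
  obtain ⟨hu0, hτ0, hstab⟩ := hd
  have h1 : 0 ≤ ∑ b ∈ c.Groups, ∑ r : c.R,
      ((∑ m ∈ b, u m) + c.routeToll τ r - c.V b r) * x b r := by
    refine Finset.sum_nonneg (fun b hb => Finset.sum_nonneg (fun r _ => ?_))
    exact mul_nonneg (by linarith [hstab b hb r]) (hx0 b r)
  have h2 : 0 ≤ ∑ m : c.M, u m *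
      (1 - ∑ r : c.R, ∑ b ∈ c.Groups.filter (fun b => m ∈ b), x b r) := by
    refine Finset.sum_nonneg (fun m _ => mul_nonneg (hu0 m) ?_)
    linarith [hxrow m]
  have h3 : 0 ≤ ∑ e : c.E, τ e * ((c.q e : ℝ) - c.edgeLoad x e) := by
    refine Finset.sum_nonneg (fun e _ => mul_nonneg (hτ0 e) ?_)
    linarith [hxedge e]
  have := OS_gap c x u τ
  linarith

/-- complementary slackness from a zero duality gap -/
lemma OS_cs (c : CarpoolMarket) (x : Finset c.M → c.R → ℝ) (u : c.M → ℝ) (τ : c.E → ℝ)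
    (hx : c.LPFeasible x) (hd : c.DualFeasible u τ)
    (heq : c.dualObj u τ = c.welfare x) :
    (∀ b ∈ c.Groups, ∀ r : c.R,
        ((∑ m ∈ b, u m) + c.routeToll τ r - c.V b r) * x b r = 0) ∧
    (∀ m : c.M, u m *
        (1 - ∑ r : c.R, ∑ b ∈ c.Groups.filter (fun b => m ∈ b), x b r) = 0) ∧
    (∀ e : c.E, τ e * ((c.q e : ℝ) - c.edgeLoad x e) = 0) := by
  obtain ⟨hx0, hxsupp, hxrow, hxedge⟩ := hx
  obtain ⟨hu0, hτ0, hstab⟩ := hd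
  have hterm1 : ∀ b ∈ c.Groups, ∀ r : c.R,
      0 ≤ ((∑ m ∈ b, u m) + c.routeToll τ r - c.V b r) * x b r :=
    fun b hb r => mul_nonneg (by linarith [hstab b hb r]) (hx0 b r)
  have hterm2 : ∀ m : c.M, 0 ≤ u m *
      (1 - ∑ r : c.R, ∑ b ∈ c.Groups.filter (fun b => m ∈ b), x b r) :=
    fun m => mul_nonneg (hu0 m) (by linarith [hxrow m])
  have hterm3 : ∀ e : c.E, 0 ≤ τ e * ((c.q e : ℝ) - c.edgeLoad x e) :=
    fun e => mul_nonneg (hτ0 e) (by linarith [hxedge e])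
  have h1 : 0 ≤ ∑ b ∈ c.Groups, ∑ r : c.R,
      ((∑ m ∈ b, u m) + c.routeToll τ r - c.V b r) * x b r :=
    Finset.sum_nonneg (fun b hb => Finset.sum_nonneg (fun r _ => hterm1 b hb r))
  have h2 : 0 ≤ ∑ m : c.M, u m *
      (1 - ∑ r : c.R, ∑ b ∈ c.Groups.filter (fun b => m ∈ b), x b r) :=
    Finset.sum_nonneg (fun m _ => hterm2 m)
  have h3 : 0 ≤ ∑ e : c.E, τ e * ((c.q e : ℝ) - c.edgeLoad x e) :=
    Finset.sum_nonneg (fun e _ => hterm3 e)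
  have hgap := OS_gap c x u τ
  have hz1 : ∑ b ∈ c.Groups, ∑ r : c.R,
      ((∑ m ∈ b, u m) + c.routeToll τ r - c.V b r) * x b r = 0 := by linarith
  have hz2 : ∑ m : c.M, u m *
      (1 - ∑ r : c.R, ∑ b ∈ c.Groups.filter (fun b => m ∈ b), x b r) = 0 := by linarith
  have hz3 : ∑ e : c.E, τ e * ((c.q e : ℝ) - c.edgeLoad x e) = 0 := by linarith
  refine ⟨?_, ?_, ?_⟩
  · intro b hb r
    have hinner := (Finset.sum_eq_zero_iff_of_nonneg
      (fun b hb => Finset.sum_nonneg (fun r _ => hterm1 b hb r))).mp hz1 b hb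
    exact (Finset.sum_eq_zero_iff_of_nonneg (fun r _ => hterm1 b hb r)).mp hinner r
      (Finset.mem_univ r)
  · intro m
    exact (Finset.sum_eq_zero_iff_of_nonneg (fun m _ => hterm2 m)).mp hz2 m (Finset.mem_univ m)
  · intro e
    exact (Finset.sum_eq_zero_iff_of_nonneg (fun e _ => hterm3 e)).mp hz3 e (Finset.mem_univ e)

end CarpoolLemmas

section BinaryLemmas

open Finset

/-- if a rider is in an organized trip, every other potential trip of his is not organized -/
lemma OS_unique (c : CarpoolMarket) (x : Finset c.M → c.R → ℝ)
    (hbin : c.IsBinary x) (hfeas : c.LPFeasible x)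
    {b : Finset c.M} {r : c.R} {m : c.M} (hbG : b ∈ c.Groups) (hm : m ∈ b)
    (hx1 : x b r = 1) :
    ∀ b' r', b' ∈ c.Groups → m ∈ b' → ¬(b' = b ∧ r' = r) → x b' r' = 0 := by
  intro b' r' hb'G hm' hne
  by_contra hne0
  have hx'1 : x b' r' = 1 := (hbin b' r').resolve_left hne0
  obtain ⟨hx0, hxsupp, hxrow, hxedge⟩ := hfeas
  set F : Finset (Finset c.M) := c.Groups.filter (fun b => m ∈ b) with hF
  have hbF : b ∈ F := Finset.mem_filter.mpr ⟨hbG, hm⟩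
  have hb'F : b' ∈ F := Finset.mem_filter.mpr ⟨hb'G, hm'⟩
  have hrow := hxrow m
  rw [← hF] at hrow
  set g : c.R → ℝ := fun r'' => ∑ b'' ∈ F, x b'' r'' with hg
  have hgnn : ∀ r'', 0 ≤ g r'' := fun r'' => Finset.sum_nonneg (fun b'' _ => hx0 b'' r'')
  by_cases hrr : r' = r
  · subst hrr
    have hbb : b' ≠ b := fun h => hne ⟨h, rfl⟩
    have hpair : x b' r' + x b r' ≤ g r' := by
      rw [hg]
      have := Finset.sum_pair (f := fun b'' => x b'' r') hbb
      rw [← this]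
      refine Finset.sum_le_sum_of_subset_of_nonneg ?_ (fun i _ _ => hx0 i r')
      intro i hi
      rcases Finset.mem_insert.mp hi with h | h
      · exact h ▸ hb'F
      · exact (Finset.mem_singleton.mp h) ▸ hbF
    have hle : g r' ≤ ∑ r'' : c.R, g r'' := by
      refine Finset.single_le_sum (fun r'' _ => hgnn r'') (Finset.mem_univ r')
    linarith
  · have h1 : x b r ≤ g r := Finset.single_le_sum (fun b'' _ => hx0 b'' r) hbF
    have h2 : x b' r' ≤ g r' := Finset.single_le_sum (fun b'' _ => hx0 b'' r') hb'F
    have hpair : g r + g r' ≤ ∑ r'' : c.R, g r'' := by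
      have hp := Finset.sum_pair (f := g) (Ne.symm hrr)
      rw [← hp]
      refine Finset.sum_le_sum_of_subset_of_nonneg (Finset.subset_univ _)
        (fun i _ _ => hgnn i)
    linarith

/-- evaluating the matched sum of a rider belonging to an organized trip -/
lemma OS_eval (c : CarpoolMarket) (x : Finset c.M → c.R → ℝ)
    (hbin : c.IsBinary x) (hfeas : c.LPFeasible x)
    {b : Finset c.M} {r : c.R} {m : c.M} (hbG : b ∈ c.Groups) (hm : m ∈ b)
    (hx1 : x b r = 1) (g : Finset c.M → c.R → ℝ) :
    ∑ r' : c.R, ∑ b' ∈ c.Groups.filter (fun b => m ∈ b), g b' r' * x b' r' = g b r := by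
  have hbF : b ∈ c.Groups.filter (fun b => m ∈ b) := Finset.mem_filter.mpr ⟨hbG, hm⟩
  rw [Finset.sum_eq_single_of_mem r (Finset.mem_univ r)]
  · rw [Finset.sum_eq_single_of_mem b hbF]
    · rw [hx1, mul_one]
    · intro b' hb' hne
      rw [OS_unique c x hbin hfeas hbG hm hx1 b' r
        (Finset.mem_filter.mp hb').1 (Finset.mem_filter.mp hb').2
        (fun h => hne h.1), mul_zero]
  · intro r' _ hne
    refine Finset.sum_eq_zero (fun b' hb' => ?_)
    rw [OS_unique c x hbin hfeas hbG hm hx1 b' r'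
      (Finset.mem_filter.mp hb').1 (Finset.mem_filter.mp hb').2
      (fun h => hne h.2), mul_zero]

/-- every rider is either in some organized trip or completely unmatched -/
lemma OS_dichotomy (c : CarpoolMarket) (x : Finset c.M → c.R → ℝ)
    (hbin : c.IsBinary x) (hfeas : c.LPFeasible x) (m : c.M) :
    (∃ b r, b ∈ c.Groups ∧ m ∈ b ∧ x b r = 1) ∨ (∀ b r, m ∈ b → x b r = 0) := by
  by_cases h : ∃ b r, b ∈ c.Groups ∧ m ∈ b ∧ x b r = 1
  · exact Or.inl h
  · right
    intro b r hm
    rcases hbin b r with h0 | h1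
    · exact h0
    · by_cases hbG : b ∈ c.Groups
      · exact absurd ⟨b, r, hbG, hm, h1⟩ h
      · exact hfeas.2.1 b r hbG

/-- an unmatched rider has zero matched sum -/
lemma OS_unmatched_sum (c : CarpoolMarket) (x : Finset c.M → c.R → ℝ)
    (m : c.M) (h : ∀ b r, m ∈ b → x b r = 0) (g : Finset c.M → c.R → ℝ) :
    ∑ r' : c.R, ∑ b' ∈ c.Groups.filter (fun b => m ∈ b), g b' r' * x b' r' = 0 := by
  refine Finset.sum_eq_zero (fun r' _ => Finset.sum_eq_zero (fun b' hb' => ?_))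
  rw [h b' r' (Finset.mem_filter.mp hb').2, mul_zero]

end BinaryLemmas

section Translation

open Finset

/-- constraint matrix of the carpooling LP -/
noncomputable def OS_A (c : CarpoolMarket) : (c.M ⊕ c.E) → (Finset c.M × c.R) → ℝ :=
  Sum.elim (fun m i => if i.1 ∈ c.Groups ∧ m ∈ i.1 then 1 else 0)
    (fun e i => if i.1 ∈ c.Groups ∧ e ∈ c.edges i.2 then 1 else 0)

/-- right-hand side of the carpooling LP -/
noncomputable def OS_bb (c : CarpoolMarket) : (c.M ⊕ c.E) → ℝ :=
  Sum.elim (fun _ => 1) (fun e => (c.q e : ℝ))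

/-- objective vector of the carpooling LP -/
noncomputable def OS_cc (c : CarpoolMarket) : (Finset c.M × c.R) → ℝ :=
  fun i => if i.1 ∈ c.Groups then c.V i.1 i.2 else 0

lemma OS_trans_row (c : CarpoolMarket) (z : Finset c.M → c.R → ℝ) (m : c.M) :
    ∑ i : Finset c.M × c.R, OS_A c (Sum.inl m) i * z i.1 i.2
      = ∑ r : c.R, ∑ b ∈ c.Groups.filter (fun b => m ∈ b), z b r := by
  rw [Fintype.sum_prod_type, Finset.sum_comm]
  refine Finset.sum_congr rfl (fun r _ => ?_)
  rw [Finset.sum_filter, OS_mem_sum c.Groups (fun b => if m ∈ b then z b r else 0)]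
  refine Finset.sum_congr rfl (fun b _ => ?_)
  by_cases h1 : b ∈ c.Groups <;> by_cases h2 : m ∈ b <;> simp [OS_A, h1, h2]

lemma OS_trans_edge (c : CarpoolMarket) (z : Finset c.M → c.R → ℝ) (e : c.E) :
    ∑ i : Finset c.M × c.R, OS_A c (Sum.inr e) i * z i.1 i.2
      = ∑ r ∈ Finset.univ.filter (fun r => e ∈ c.edges r), ∑ b ∈ c.Groups, z b r := by
  rw [Fintype.sum_prod_type, Finset.sum_comm, Finset.sum_filter]
  refine Finset.sum_congr rfl (fun r _ => ?_)
  rw [OS_mem_sum c.Groups (fun b => z b r)]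
  rw [← OS_pull Finset.univ (e ∈ c.edges r) (fun b => if b ∈ c.Groups then z b r else 0)]
  refine Finset.sum_congr rfl (fun b _ => ?_)
  by_cases h1 : b ∈ c.Groups <;> by_cases h2 : e ∈ c.edges r <;> simp [OS_A, h1, h2]

lemma OS_trans_obj (c : CarpoolMarket) (z : Finset c.M → c.R → ℝ) :
    ∑ i : Finset c.M × c.R, OS_cc c i * z i.1 i.2 = c.welfare z := by
  rw [CarpoolMarket.welfare, Fintype.sum_prod_type,
    OS_mem_sum c.Groups (fun b => ∑ r : c.R, c.V b r * z b r)]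
  refine Finset.sum_congr rfl (fun b _ => ?_)
  rw [← OS_pull Finset.univ (b ∈ c.Groups) (fun r => c.V b r * z b r)]
  refine Finset.sum_congr rfl (fun r _ => ?_)
  by_cases h1 : b ∈ c.Groups <;> simp [OS_cc, h1]

/-- Strong duality for the carpooling LP: an optimal primal solution dominates
some feasible dual solution. -/
lemma OS_strong (c : CarpoolMarket) (x : Finset c.M → c.R → ℝ) (hopt : c.LPOptimal x) :
    ∃ (u0 : c.M → ℝ) (τ0 : c.E → ℝ), c.DualFeasible u0 τ0 ∧
      c.dualObj u0 τ0 ≤ c.welfare x := by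
  classical
  obtain ⟨⟨hx0, hxsupp, hxrow, hxedge⟩, hbest⟩ := hopt
  have hrows : ∀ k, ∑ i : Finset c.M × c.R, OS_A c k i * x i.1 i.2 ≤ OS_bb c k := by
    intro k
    rcases k with m | e
    · rw [OS_trans_row c x m]; exact hxrow m
    · rw [OS_trans_edge c x e]; exact hxedge e
  have hopt' : ∀ z : (Finset c.M × c.R) → ℝ, (∀ i, 0 ≤ z i) →
      (∀ k, ∑ i : Finset c.M × c.R, OS_A c k i * z i ≤ OS_bb c k) →
      ∑ i : Finset c.M × c.R, OS_cc c i * z i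
        ≤ ∑ i : Finset c.M × c.R, OS_cc c i * x i.1 i.2 := by
    intro z hz0 hzrows
    set y' : Finset c.M → c.R → ℝ := fun b r => if b ∈ c.Groups then z (b, r) else 0 with hy'
    have hccy' : ∀ i : Finset c.M × c.R, OS_cc c i * y' i.1 i.2 = OS_cc c i * z i := by
      intro i
      by_cases h1 : i.1 ∈ c.Groups
      · simp [hy', OS_cc, h1]
      · simp [hy', OS_cc, h1]
    have hAy' : ∀ k (i : Finset c.M × c.R), OS_A c k i * y' i.1 i.2 = OS_A c k i * z i := by
      intro k i
      by_cases h1 : i.1 ∈ c.Groups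
      · simp [hy', h1]
      · rcases k with m | e <;> simp [OS_A, hy', h1]
    have hy'feas : c.LPFeasible y' := by
      refine ⟨?_, ?_, ?_, ?_⟩
      · intro b r
        by_cases h1 : b ∈ c.Groups <;> simp [hy', h1, hz0 (b, r)]
      · intro b r hb; simp [hy', hb]
      · intro m
        have hcongr : ∑ r : c.R, ∑ b ∈ c.Groups.filter (fun b => m ∈ b), y' b r
            = ∑ i : Finset c.M × c.R, OS_A c (Sum.inl m) i * z i := by
          rw [← OS_trans_row c y' m]
          exact Finset.sum_congr rfl (fun i _ => hAy' (Sum.inl m) i)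
        rw [hcongr]
        exact hzrows (Sum.inl m)
      · intro e
        have hcongr : c.edgeLoad y' e
            = ∑ i : Finset c.M × c.R, OS_A c (Sum.inr e) i * z i := by
          rw [CarpoolMarket.edgeLoad, ← OS_trans_edge c y' e]
          exact Finset.sum_congr rfl (fun i _ => hAy' (Sum.inr e) i)
        rw [hcongr]
        exact hzrows (Sum.inr e)
    calc ∑ i : Finset c.M × c.R, OS_cc c i * z i
        = ∑ i : Finset c.M × c.R, OS_cc c i * y' i.1 i.2 :=
          (Finset.sum_congr rfl (fun i _ => hccy' i)).symm
      _ = c.welfare y' := OS_trans_obj c y'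
      _ ≤ c.welfare x := hbest y' hy'feas
      _ = ∑ i : Finset c.M × c.R, OS_cc c i * x i.1 i.2 := (OS_trans_obj c x).symm
  obtain ⟨y, hy0, hyA, hyobj⟩ := lp_strong_duality (OS_A c) (OS_bb c) (OS_cc c)
    (fun i => x i.1 i.2) (fun i => hx0 i.1 i.2) hrows hopt'
  refine ⟨fun m => y (Sum.inl m), fun e => y (Sum.inr e),
    ⟨fun m => hy0 _, fun e => hy0 _, ?_⟩, ?_⟩
  · intro b hb r
    have h := hyA (b, r)
    rw [Fintype.sum_sum_type] at h
    have hc : OS_cc c (b, r) = c.V b r := by simp [OS_cc, hb]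
    have h1 : ∑ m : c.M, y (Sum.inl m) * OS_A c (Sum.inl m) (b, r)
        = ∑ m ∈ b, y (Sum.inl m) := by
      rw [OS_mem_sum b (fun m => y (Sum.inl m))]
      refine Finset.sum_congr rfl (fun m _ => ?_)
      by_cases h2 : m ∈ b <;> simp [OS_A, hb, h2]
    have h2 : ∑ e : c.E, y (Sum.inr e) * OS_A c (Sum.inr e) (b, r)
        = c.routeToll (fun e => y (Sum.inr e)) r := by
      rw [CarpoolMarket.routeToll, OS_mem_sum (c.edges r) (fun e => y (Sum.inr e))]
      refine Finset.sum_congr rfl (fun e _ => ?_)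
      by_cases h3 : e ∈ c.edges r <;> simp [OS_A, hb, h3]
    rw [hc] at h
    refine le_trans h ?_
    rw [← h1, ← h2]
  · have hbbsum : ∑ k : c.M ⊕ c.E, y k * OS_bb c k
        = c.dualObj (fun m => y (Sum.inl m)) (fun e => y (Sum.inr e)) := by
      rw [Fintype.sum_sum_type, CarpoolMarket.dualObj]
      congr 1
      · exact Finset.sum_congr rfl (fun m _ => by simp [OS_bb])
      · refine Finset.sum_congr rfl (fun e _ => ?_)
        simp [OS_bb, mul_comm]
    rw [← hbbsum]
    refine le_trans hyobj ?_
    rw [OS_trans_obj c x]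

end Translation

/-- If `x*` is an optimal `{0,1}`-valued solution of (LP) and `(u*, τ*)` is an
optimal solution of its dual (D), then setting
`p*^m = ∑_r ∑_{b∋m} x*_r(b) v_r^m(b) − u*^m` for each rider `m` makes `(x*, p*, τ*)` a market
equilibrium.  Conversely, for any market equilibrium `(x*, p*, τ*)`, the trip vector `x*` is an
optimal solution of (LP) and the pair `(u*, τ*)`, where `u*` is the induced utility vector,
is an optimal solution of (D). -/
theorem equilibrium_from_primal_dual_optima (c : CarpoolMarket) :
    ((∀ x u τ, c.LPOptimal x → c.IsBinary x → c.DualOptimal u τ →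
        c.IsEquilibrium x
          (fun m =>
            (∑ r : c.R, ∑ b ∈ c.Groups.filter (fun b => m ∈ b), x b r * c.riderValue m b r)
              - u m)
          τ) ∧
      (∀ x p τ, c.IsEquilibrium x p τ →
        c.LPOptimal x ∧ c.DualOptimal (c.utility x p) τ)) := by
  constructor
  · -- Statement 1: primal/dual optima give an equilibrium
    intro x u τ hLP hbin hD
    obtain ⟨u0, τ0, hd0, hobj0⟩ := OS_strong c x hLP
    have hfeas := hLP.1
    have hdf := hD.1
    have hweak := OS_weak c x u τ hfeas hdf
    have heq : c.dualObj u τ = c.welfare x :=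
      le_antisymm (le_trans (hD.2 u0 τ0 hd0) hobj0) hweak
    obtain ⟨cs1, cs2, cs3⟩ := OS_cs c x u τ hfeas hdf heq
    set p : c.M → ℝ := fun m =>
      (∑ r : c.R, ∑ b ∈ c.Groups.filter (fun b => m ∈ b), x b r * c.riderValue m b r)
        - u m with hp
    have hcomm : ∀ m : c.M,
        ∑ r : c.R, ∑ b ∈ c.Groups.filter (fun b => m ∈ b), x b r * c.riderValue m b r
          = ∑ r : c.R, ∑ b ∈ c.Groups.filter (fun b => m ∈ b), c.riderValue m b r * x b r :=
      fun m => Finset.sum_congr rfl (fun r _ => Finset.sum_congr rfl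
        (fun b _ => mul_comm _ _))
    have hpm : ∀ m, p m = (∑ r : c.R, ∑ b ∈ c.Groups.filter (fun b => m ∈ b),
        x b r * c.riderValue m b r) - u m := fun m => rfl
    have hputil : ∀ m, c.utility x p m = u m := by
      intro m
      rw [CarpoolMarket.utility, hpm m, hcomm m]
      ring
    refine ⟨⟨hbin, hfeas⟩, hdf.2.1, ?_, ?_, ?_, ?_, ?_⟩
    · intro m; rw [hputil m]; exact hdf.1 m
    · intro b hb r
      have : ∑ m ∈ b, c.utility x p m = ∑ m ∈ b, u m :=
        Finset.sum_congr rfl (fun m _ => hputil m)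
      rw [this]
      linarith [hdf.2.2 b hb r]
    · intro b hb r hx1
      have hsum : ∀ m ∈ b,
          (∑ r' : c.R, ∑ b' ∈ c.Groups.filter (fun b => m ∈ b), x b' r' * c.riderValue m b' r')
            = c.riderValue m b r := by
        intro m hm
        rw [hcomm m]
        exact OS_eval c x hbin hfeas hb hm hx1 (fun b' r' => c.riderValue m b' r')
      have hps : ∑ m ∈ b, p m
          = (∑ m ∈ b, c.riderValue m b r) - ∑ m ∈ b, u m := by
        rw [← Finset.sum_sub_distrib]
        exact Finset.sum_congr rfl (fun m hm => by rw [hpm m, hsum m hm])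
      have hcs := cs1 b hb r
      rw [hx1, mul_one] at hcs
      have hV : c.V b r = (∑ m ∈ b, c.riderValue m b r) - c.tripCost b r := rfl
      rw [hps]
      linarith
    · intro m hm0
      have hz : ∑ r : c.R, ∑ b ∈ c.Groups.filter (fun b => m ∈ b),
          x b r * c.riderValue m b r = 0 :=
        Finset.sum_eq_zero (fun r _ => Finset.sum_eq_zero (fun b hb => by
          rw [hm0 b r (Finset.mem_filter.mp hb).2, zero_mul]))
      have hsz : ∑ r : c.R, ∑ b ∈ c.Groups.filter (fun b => m ∈ b), x b r = 0 :=
        Finset.sum_eq_zero (fun r _ => Finset.sum_eq_zero (fun b hb =>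
          hm0 b r (Finset.mem_filter.mp hb).2))
      have hu0 : u m = 0 := by
        have := cs2 m
        rw [hsz] at this
        simpa using this
      rw [hpm m, hz, hu0, sub_zero]
    · intro e hlt
      have := cs3 e
      rcases mul_eq_zero.mp this with h | h
      · exact h
      · exfalso; have : (c.q e : ℝ) - c.edgeLoad x e > 0 := by linarith
        linarith
  · -- Statement 2: an equilibrium gives primal and dual optima
    intro x pp τ heqm
    obtain ⟨⟨hbin, hfeas⟩, hτ0, hIR, hstab, hBB1, hBB2, hclr⟩ := heqm
    have hdf : c.DualFeasible (c.utility x pp) τ :=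
      ⟨hIR, hτ0, fun b hb r => by linarith [hstab b hb r]⟩
    have hs1 : ∑ b ∈ c.Groups, ∑ r : c.R,
        ((∑ m ∈ b, c.utility x pp m) + c.routeToll τ r - c.V b r) * x b r = 0 := by
      refine Finset.sum_eq_zero (fun b hb => Finset.sum_eq_zero (fun r _ => ?_))
      rcases hbin b r with h0 | h1
      · rw [h0, mul_zero]
      · have hBB := hBB1 b hb r h1
        have hum : ∀ m ∈ b, c.utility x pp m = c.riderValue m b r - pp m := by
          intro m hm
          rw [CarpoolMarket.utility,
            OS_eval c x hbin hfeas hb hm h1 (fun b' r' => c.riderValue m b' r')]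
        have husum : ∑ m ∈ b, c.utility x pp m
            = (∑ m ∈ b, c.riderValue m b r) - ∑ m ∈ b, pp m := by
          rw [← Finset.sum_sub_distrib]
          exact Finset.sum_congr rfl (fun m hm => hum m hm)
        have hV : c.V b r = (∑ m ∈ b, c.riderValue m b r) - c.tripCost b r := rfl
        rw [h1, mul_one, husum]
        linarith
    have hs2 : ∑ m : c.M, c.utility x pp m *
        (1 - ∑ r : c.R, ∑ b ∈ c.Groups.filter (fun b => m ∈ b), x b r) = 0 := by
      refine Finset.sum_eq_zero (fun m _ => ?_)
      rcases OS_dichotomy c x hbin hfeas m with ⟨b, r, hb, hm, h1⟩ | hnone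
      · have : ∑ r' : c.R, ∑ b' ∈ c.Groups.filter (fun b => m ∈ b), x b' r' = 1 := by
          have := OS_eval c x hbin hfeas hb hm h1 (fun _ _ => (1:ℝ))
          rw [← this]
          exact Finset.sum_congr rfl (fun r' _ => Finset.sum_congr rfl
            (fun b' _ => (one_mul _).symm))
        rw [this]
        simp
      · have hu0 : c.utility x pp m = 0 := by
          rw [CarpoolMarket.utility,
            OS_unmatched_sum c x m hnone (fun b' r' => c.riderValue m b' r'),
            hBB2 m hnone, sub_zero]
        rw [hu0, zero_mul]
    have hs3 : ∑ e : c.E, τ e * ((c.q e : ℝ) - c.edgeLoad x e) = 0 := by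
      refine Finset.sum_eq_zero (fun e _ => ?_)
      rcases lt_or_eq_of_le (hfeas.2.2.2 e) with hlt | heq'
      · rw [hclr e hlt, zero_mul]
      · rw [heq', sub_self, mul_zero]
    have hgap := OS_gap c x (c.utility x pp) τ
    rw [hs1, hs2, hs3] at hgap
    have hgapzero : c.dualObj (c.utility x pp) τ = c.welfare x := by linarith
    constructor
    · refine ⟨hfeas, fun y hy => ?_⟩
      calc c.welfare y ≤ c.dualObj (c.utility x pp) τ := OS_weak c y _ τ hy hdf
        _ = c.welfare x := hgapzero
    · refine ⟨hdf, fun u' τ' hd' => ?_⟩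
      calc c.dualObj (c.utility x pp) τ = c.welfare x := hgapzero
        _ ≤ c.dualObj u' τ' := OS_weak c x u' τ' hfeas hd'
end
end

section
/- An outcome (x*, p*, τ*) with induced utility vector u* is a market equilibrium if and only if all of the following hold: x* is a feasible {0,1}-valued solution of (LP); (u*, τ*) is a feasible solution of the dual (D); u*^m > 0 only if rider m belongs to some organized trip; τ*_e > 0 only if Σ_{r∋e} Σ_b x*_r(b) = q_e; and x*_r(b) = 1 only if Σ_{m∈b} u*^m + Σ_{e∈r} τ*_e = V_r(b). -/
open Classical
noncomputable section

namespace CarpoolMarket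

lemma zero_of_other_trip (c : CarpoolMarket) {x : Finset c.M → c.R → ℝ}
    (hx : c.TripFeasible x) {b : Finset c.M} {r : c.R} (h1 : x b r = 1)
    {m : c.M} (hm : m ∈ b) {b' : Finset c.M} {r' : c.R} (hm' : m ∈ b')
    (hne : (b', r') ≠ (b, r)) : x b' r' = 0 := by
  obtain ⟨hbin, hnn, hzero, hrider, _⟩ := hx
  rcases hbin b' r' with h | h
  · exact h
  exfalso
  have hbG : b ∈ c.Groups := by
    by_contra hc
    rw [hzero b r hc] at h1; norm_num at h1
  have hbG' : b' ∈ c.Groups := by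
    by_contra hc
    rw [hzero b' r' hc] at h; norm_num at h
  have hsum := hrider m
  have key : (2:ℝ) ≤ ∑ r : c.R, ∑ b ∈ c.Groups.filter (fun b => m ∈ b), x b r := by
    have hrew : (∑ r : c.R, ∑ b ∈ c.Groups.filter (fun b => m ∈ b), x b r)
        = ∑ q ∈ Finset.univ ×ˢ (c.Groups.filter (fun b => m ∈ b)), x q.2 q.1 :=
      by rw [Finset.sum_product' (f := fun r b => x b r)]
    rw [hrew]
    have hmem : (r, b) ∈ Finset.univ ×ˢ (c.Groups.filter (fun b => m ∈ b)) := by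
      simp [hbG, hm]
    have hmem' : (r', b') ∈ Finset.univ ×ˢ (c.Groups.filter (fun b => m ∈ b)) := by
      simp [hbG', hm']
    have hne2 : (r, b) ≠ (r', b') := by
      intro hcontra
      apply hne
      rw [Prod.ext_iff] at hcontra ⊢
      exact ⟨hcontra.2.symm, hcontra.1.symm⟩
    calc (2:ℝ) = x b r + x b' r' := by rw [h1, h]; norm_num
    _ = ∑ q ∈ ({(r,b), (r',b')} : Finset (c.R × Finset c.M)), x q.2 q.1 := by
        rw [Finset.sum_pair hne2]
    _ ≤ _ := Finset.sum_le_sum_of_subset_of_nonneg (by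
        intro q hq
        simp only [Finset.mem_insert, Finset.mem_singleton] at hq
        rcases hq with h|h <;> subst h <;> assumption)
        (fun q _ _ => hnn q.2 q.1)
  linarith

lemma eval_sum (c : CarpoolMarket) {x : Finset c.M → c.R → ℝ}
    (hx : c.TripFeasible x) {b : Finset c.M} {r : c.R} (hbG : b ∈ c.Groups)
    (h1 : x b r = 1) {m : c.M} (hm : m ∈ b) (f : Finset c.M → c.R → ℝ) :
    (∑ r' : c.R, ∑ b' ∈ c.Groups.filter (fun b' => m ∈ b'), f b' r' * x b' r') = f b r := by
  rw [← Finset.sum_product' (f := fun r' b' => f b' r' * x b' r')]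
  rw [Finset.sum_eq_single (r, b)]
  · simp [h1]
  · intro q hq hne
    simp only [Finset.mem_product, Finset.mem_filter] at hq
    have hz := c.zero_of_other_trip hx h1 hm hq.2.2 (by
      intro hc; apply hne; rw [Prod.ext_iff] at hc ⊢; exact ⟨hc.2, hc.1⟩)
    simp [hz]
  · intro habs
    exact absurd (by simp [hbG, hm] : (r, b) ∈ _) habs

lemma utility_eq_zero (c : CarpoolMarket) {x : Finset c.M → c.R → ℝ} {p : c.M → ℝ}
    {m : c.M} (hall : ∀ b r, m ∈ b → x b r = 0) :
    c.utility x p m = - p m := by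
  unfold utility
  rw [Finset.sum_eq_zero, zero_sub]
  intro r _
  apply Finset.sum_eq_zero
  intro b hb
  simp only [Finset.mem_filter] at hb
  rw [hall b r hb.2, mul_zero]

lemma sum_utility_eq (c : CarpoolMarket) {x : Finset c.M → c.R → ℝ} {p : c.M → ℝ}
    (hx : c.TripFeasible x) {b : Finset c.M} {r : c.R} (hbG : b ∈ c.Groups)
    (h1 : x b r = 1) :
    (∑ m ∈ b, c.utility x p m) = (∑ m ∈ b, c.riderValue m b r) - ∑ m ∈ b, p m := by
  rw [← Finset.sum_sub_distrib]
  apply Finset.sum_congr rfl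
  intro m hm
  unfold utility
  rw [c.eval_sum hx hbG h1 hm (fun b' r' => c.riderValue m b' r')]

end CarpoolMarket

/-- An outcome `(x*, p*, τ*)` with induced utility vector `u*` is a market
equilibrium if and only if: `x*` is a feasible `{0,1}`-valued solution of (LP); `(u*, τ*)` is a
feasible solution of the dual (D); `u*^m > 0` only if rider `m` belongs to some organized trip;
`τ*_e > 0` only if the load of `e` meets its capacity; and `x*_r(b) = 1` only if
`∑_{m∈b} u*^m + ∑_{e∈r} τ*_e = V_r(b)` (complementary slackness). -/
theorem equilibrium_iff_primal_dual_feasible_and_complementary_slackness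
    (c : CarpoolMarket) (x : Finset c.M → c.R → ℝ) (p : c.M → ℝ) (τ : c.E → ℝ) :
    c.IsEquilibrium x p τ ↔
      (c.TripFeasible x ∧
       c.DualFeasible (c.utility x p) τ ∧
       (∀ m : c.M, 0 < c.utility x p m → ∃ b r, m ∈ b ∧ x b r = 1) ∧
       (∀ e : c.E, 0 < τ e → c.edgeLoad x e = (c.q e : ℝ)) ∧
       (∀ b ∈ c.Groups, ∀ r : c.R, x b r = 1 →
          (∑ m ∈ b, c.utility x p m) + c.routeToll τ r = c.V b r)) := by
  constructor
  · rintro ⟨hfeas, hτ, hIR, hstab, hBB, hfree, hMC⟩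
    refine ⟨hfeas, ⟨hIR, hτ, fun b hb r => by have := hstab b hb r; linarith⟩, ?_, ?_, ?_⟩
    · intro m hpos
      by_contra hcon
      push_neg at hcon
      have hall : ∀ b r, m ∈ b → x b r = 0 := by
        intro b r hmb
        rcases hfeas.1 b r with h | h
        · exact h
        · exact absurd h (hcon b r hmb)
      have hp0 : p m = 0 := hfree m hall
      have := c.utility_eq_zero (p := p) hall
      rw [this, hp0] at hpos
      norm_num at hpos
    · intro e hpos
      have hle := hfeas.2.2.2.2 e
      by_contra hne
      have hlt : c.edgeLoad x e < (c.q e : ℝ) := lt_of_le_of_ne hle hne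
      have := hMC e hlt
      linarith
    · intro b hb r h1
      have hsum := c.sum_utility_eq (p := p) hfeas hb h1
      have hbb := hBB b hb r h1
      unfold CarpoolMarket.V
      rw [hsum, hbb]
      ring
  · rintro ⟨hfeas, ⟨hu, hτ, hdual⟩, hcs1, hcs2, hcs3⟩
    refine ⟨hfeas, hτ, hu, fun b hb r => by have := hdual b hb r; linarith, ?_, ?_, ?_⟩
    · intro b hb r h1
      have hsum := c.sum_utility_eq (p := p) hfeas hb h1
      have hcs := hcs3 b hb r h1
      unfold CarpoolMarket.V at hcs
      rw [hsum] at hcs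
      linarith
    · intro m hall
      have hz := c.utility_eq_zero (p := p) hall
      have h1 : 0 ≤ c.utility x p m := hu m
      have h2 : ¬ (0 < c.utility x p m) := by
        intro hpos
        obtain ⟨b, r, hmb, hx1⟩ := hcs1 m hpos
        rw [hall b r hmb] at hx1
        norm_num at hx1
      have h3 : c.utility x p m = 0 := le_antisymm (not_lt.1 h2) h1
      rw [hz] at h3
      linarith
    · intro e hlt
      by_contra hne
      have hpos : 0 < τ e := lt_of_le_of_ne (hτ e) (Ne.symm hne)
      have := hcs2 e hpos
      linarith
end
end

section
/- Assume riders have homogeneous carpool disutility γ with γ(1)=0 and nondecreasing increments. Fix a route r with travel time t_r > 0 and define η^m_r = α^m − β^m·t_r and θ(d) = d·γ(d) + δ·d. Then for every nonempty b̄ ⊆ M, the augmented value satisfies V̄_r(b̄) = max_{1 ≤ d ≤ min(A,|b̄|)} ( Σ_{j=1}^d η^{(j)} − θ(d)·t_r ), where η^{(1)} ≥ η^{(2)} ≥ … are the values η^m_r for m ∈ b̄ listed in nonincreasing order; in particular, some representative group h_r(b̄) consists of the |h_r(b̄)| riders of b̄ with the largest values of η^m_r. -/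
open Classical
noncomputable section

variable {M : Type} [Fintype M] [DecidableEq M]

/-- the social trip value of a feasible group `b` (`1 ≤ |b| ≤ A`) on a route with travel time
`t`: `V(b) = ∑_{m∈b} α^m − (∑_{m∈b} β^m + |b|·γ(|b|) + δ|b|)·t` -/
def tripValue (α β : M → ℝ) (γ : ℕ → ℝ) (δ t : ℝ) (b : Finset M) : ℝ :=
  (∑ m ∈ b, α m) - ((∑ m ∈ b, β m) + (b.card : ℝ) * γ b.card + δ * (b.card : ℝ)) * t

/-- the augmented trip value function
`V̄(b̄) = max {V(b) : b ⊆ b̄, 1 ≤ |b| ≤ A}` (with value `0` on the empty set) -/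
def Vbar (A : ℕ) (V : Finset M → ℝ) (bb : Finset M) : ℝ :=
  if h : (bb.powerset.filter fun b => b.Nonempty ∧ b.card ≤ A).Nonempty then
    (bb.powerset.filter fun b => b.Nonempty ∧ b.card ≤ A).sup' h V
  else 0

/-- `b` is a representative rider group of the bundle `b̄` -/
def IsRep (A : ℕ) (V : Finset M → ℝ) (bb b : Finset M) : Prop :=
  b ⊆ bb ∧ b.Nonempty ∧ b.card ≤ A ∧ V b = Vbar A V bb

/-- `topSum η b̄ d = η^{(1)} + ⋯ + η^{(d)}`: the sum of the `d` largest values of `η` on `b̄`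
(listing the values `η^m` for `m ∈ b̄`, with multiplicity, in nonincreasing order). -/
def topSum (η : M → ℝ) (bb : Finset M) (d : ℕ) : ℝ :=
  ((((bb.val.map η).sort (· ≤ ·)).reverse).take d).sum

lemma sum_le_sum_take {M : Type} [DecidableEq M] (η : M → ℝ) :
    ∀ l : List M, l.Pairwise (fun a b => η b ≤ η a) → l.Nodup →
      ∀ b : Finset M, (∀ x ∈ b, x ∈ l) →
        ∑ m ∈ b, η m ≤ ((l.take b.card).map η).sum := by
  intro l
  induction l with
  | nil =>
    intro _ _ b hb
    have : b = ∅ := Finset.eq_empty_of_forall_notMem (fun x hx => by simpa using hb x hx)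
    simp [this]
  | cons a l ih =>
    intro hp hnd b hb
    have hpl : l.Pairwise (fun a b => η b ≤ η a) := hp.of_cons
    have hndl : l.Nodup := hnd.of_cons
    have hbound : ∀ x ∈ l, η x ≤ η a := fun x hx => (List.pairwise_cons.mp hp).1 x hx
    by_cases ha : a ∈ b
    · obtain ⟨e, he⟩ : ∃ e, b.card = e + 1 :=
        Nat.exists_eq_succ_of_ne_zero (Finset.card_ne_zero_of_mem ha)
    -- sum over b = η a + sum over erase
      have hsub : ∀ x ∈ b.erase a, x ∈ l := by
        intro x hx
        have hxa : x ≠ a := Finset.ne_of_mem_erase hx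
        have := hb x (Finset.mem_of_mem_erase hx)
        simpa [hxa] using this
      have hcard : (b.erase a).card = e := by
        rw [Finset.card_erase_of_mem ha, he]; rfl
      have h1 := ih hpl hndl (b.erase a) hsub
      rw [hcard] at h1
      have hsum : ∑ m ∈ b, η m = η a + ∑ m ∈ b.erase a, η m :=
        (Finset.add_sum_erase b η ha).symm
      rw [hsum, he]
      simp only [List.take_succ_cons, List.map_cons, List.sum_cons]
      linarith
    · have hsub : ∀ x ∈ b, x ∈ l := by
        intro x hx
        have hxa : x ≠ a := fun h => ha (h ▸ hx)
        have := hb x hx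
        simpa [hxa] using this
      have h1 := ih hpl hndl b hsub
      have hlen : b.card ≤ l.length := by
        have : b ⊆ l.toFinset := fun x hx => List.mem_toFinset.mpr (hsub x hx)
        calc b.card ≤ l.toFinset.card := Finset.card_le_card this
          _ ≤ l.length := l.toFinset_card_le
      refine h1.trans ?_
      -- need ((l.take d).map η).sum ≤ (((a::l).take d).map η).sum  for d = b.card ≤ l.length
      obtain he | hpos := Nat.eq_zero_or_pos b.card
      · simp [he]
      · obtain ⟨e, he⟩ := Nat.exists_eq_succ_of_ne_zero hpos.ne'
        rw [he] at hlen ⊢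
        simp only [List.take_succ_cons, List.map_cons, List.sum_cons]
        have hlt : e < l.length := hlen
        have htake : l.take (e+1) = l.take e ++ [l.get ⟨e, hlt⟩] := by
          rw [List.take_succ]
          simp [List.getElem?_eq_getElem hlt]
        rw [htake]
        have : η (l.get ⟨e, hlt⟩) ≤ η a := hbound _ (l.get_mem _)
        simp only [List.map_append, List.sum_append, List.map_cons, List.map_nil,
          List.sum_cons, List.sum_nil]
        linarith

/-- Under homogeneous carpool disutility `γ`, with `η^m = α^m − β^m t` and
`θ(d) = d·γ(d) + δ·d`, for every nonempty `b̄ ⊆ M` the augmented value satisfies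
`V̄(b̄) = max_{1 ≤ d ≤ min(A,|b̄|)} (∑_{j=1}^d η^{(j)} − θ(d)·t)`, where
`η^{(1)} ≥ η^{(2)} ≥ …` are the values `η^m`, `m ∈ b̄`, in nonincreasing order; in particular
some representative group of `b̄` consists of riders of `b̄` with the largest values
of `η^m`. -/
theorem vbar_eq_max_topSum
    (A : ℕ) (hA : 1 ≤ A) (α β : M → ℝ) (γ : ℕ → ℝ) (δ t : ℝ)
    (hγ1 : γ 1 = 0)
    (hγ0 : ∀ d, 1 ≤ d → d ≤ A → 0 ≤ γ d)
    (hγincr : ∀ d, 2 ≤ d → d < A → γ d - γ (d - 1) ≤ γ (d + 1) - γ d)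
    (hδ : 0 ≤ δ) (ht : 0 < t)
    (bb : Finset M) (hbb : bb.Nonempty) :
    Vbar A (tripValue α β γ δ t) bb =
      (Finset.Icc 1 (min A bb.card)).sup'
        (Finset.nonempty_Icc.mpr (le_min hA (Finset.card_pos.mpr hbb)))
        (fun d => topSum (fun m => α m - β m * t) bb d -
          ((d : ℝ) * γ d + δ * (d : ℝ)) * t) ∧
    ∃ b : Finset M, IsRep A (tripValue α β γ δ t) bb b ∧
      ∀ m ∈ b, ∀ m' ∈ bb, m' ∉ b → α m' - β m' * t ≤ α m - β m * t := by
  set η : M → ℝ := fun m => α m - β m * t with hη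
  set V : Finset M → ℝ := tripValue α β γ δ t with hV
  have hVdef : ∀ b : Finset M,
      V b = (∑ m ∈ b, η m) - ((b.card : ℝ) * γ b.card + δ * b.card) * t := by
    intro b
    simp only [hV, tripValue, hη, Finset.sum_sub_distrib, ← Finset.sum_mul]
    ring
  -- the sorted list
  let r : M → M → Prop := fun a b => η b ≤ η a
  haveI : DecidableRel r := fun a b => inferInstanceAs (Decidable (η b ≤ η a))
  haveI : IsTotal M r := ⟨fun a b => le_total (η b) (η a)⟩
  haveI : IsTrans M r := ⟨fun a b c hab hbc => le_trans hbc hab⟩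
  set l : List M := List.insertionSort r bb.toList with hl
  have hsorted : l.Pairwise r := List.pairwise_insertionSort r bb.toList
  have hperm : l.Perm bb.toList := List.perm_insertionSort r bb.toList
  have hnd : l.Nodup := hperm.nodup_iff.mpr bb.nodup_toList
  have hmem : ∀ x, x ∈ l ↔ x ∈ bb := by
    intro x
    rw [hperm.mem_iff, Finset.mem_toList]
  have hlen : l.length = bb.card := by
    rw [hperm.length_eq, Finset.length_toList]
  -- topSum via l
  have htop : ∀ d, topSum η bb d = ((l.take d).map η).sum := by
    intro d
    have hcoe : (↑(l.map η) : Multiset ℝ) = bb.val.map η := by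
      have h1 : (↑l : Multiset M) = bb.val := by
        rw [Multiset.coe_eq_coe.mpr hperm, Finset.coe_toList]
      rw [← Multiset.map_coe, h1]
    have hs1 : ((bb.val.map η).sort (· ≤ ·)) = (l.map η).reverse := by
      refine (fun hp h1 h2 => List.Perm.eq_of_pairwise' (r := (· ≤ ·)) h1 h2 hp) ?_ ?_ ?_
      · refine (Multiset.coe_eq_coe.mp ?_).trans (l.map η).reverse_perm.symm
        rw [Multiset.sort_eq, hcoe]
      · exact Multiset.pairwise_sort _ _
      · rw [List.pairwise_reverse]
        exact hsorted.map η (fun a b hab => hab)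
    rw [topSum, hs1, List.reverse_reverse, ← List.map_take]
  -- top-d subsets
  set B : ℕ → Finset M := fun d => (l.take d).toFinset with hB
  have hBsub : ∀ d, B d ⊆ bb := by
    intro d x hx
    exact (hmem x).mp (List.mem_of_mem_take (List.mem_toFinset.mp hx))
  have hBcard : ∀ d, d ≤ bb.card → (B d).card = d := by
    intro d hd
    rw [hB]
    simp only
    rw [List.toFinset_card_of_nodup (hnd.sublist (List.take_sublist d l)),
      List.length_take, hlen]
    omega
  have hBsum : ∀ d, ∑ m ∈ B d, η m = ((l.take d).map η).sum := by
    intro d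
    exact List.sum_toFinset η (hnd.sublist (List.take_sublist d l))
  set f : ℕ → ℝ := fun d => topSum η bb d - ((d : ℝ) * γ d + δ * (d : ℝ)) * t with hf
  have hVB : ∀ d, 1 ≤ d → d ≤ bb.card → V (B d) = f d := by
    intro d h1 h2
    rw [hVdef, hBcard d h2, hBsum d, hf]
    simp only
    rw [htop d]
  -- membership of B d in the filter
  set S := bb.powerset.filter fun b : Finset M => b.Nonempty ∧ b.card ≤ A with hS
  have hBS : ∀ d, 1 ≤ d → d ≤ min A bb.card → B d ∈ S := by
    intro d h1 h2
    rw [hS, Finset.mem_filter, Finset.mem_powerset]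
    refine ⟨hBsub d, ?_, ?_⟩
    · rw [← Finset.card_pos, hBcard d (le_trans h2 (min_le_right _ _))]
      omega
    · rw [hBcard d (le_trans h2 (min_le_right _ _))]
      exact le_trans h2 (min_le_left _ _)
  have hSne : S.Nonempty := ⟨B 1, hBS 1 le_rfl (le_min hA (Finset.card_pos.mpr hbb))⟩
  have hIcc : (Finset.Icc 1 (min A bb.card)).Nonempty :=
    Finset.nonempty_Icc.mpr (le_min hA (Finset.card_pos.mpr hbb))
  -- upper bound for each feasible b
  have hub : ∀ b ∈ S, V b ≤ f b.card := by
    intro b hbS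
    rw [hS, Finset.mem_filter, Finset.mem_powerset] at hbS
    obtain ⟨hsub, hne, hcard⟩ := hbS
    have := sum_le_sum_take η l hsorted hnd b (fun x hx => (hmem x).mpr (hsub hx))
    rw [hVdef, hf]
    simp only
    rw [htop b.card]
    have h0 : (0:ℝ) ≤ ((b.card : ℝ) * γ b.card + δ * b.card) * t := by
      have hc1 : 1 ≤ b.card := Finset.card_pos.mpr hne
      have := hγ0 b.card hc1 hcard
      positivity
    linarith
  have hcardmem : ∀ b ∈ S, b.card ∈ Finset.Icc 1 (min A bb.card) := by
    intro b hbS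
    rw [hS, Finset.mem_filter, Finset.mem_powerset] at hbS
    obtain ⟨hsub, hne, hcard⟩ := hbS
    rw [Finset.mem_Icc]
    exact ⟨Finset.card_pos.mpr hne, le_min hcard (Finset.card_le_card hsub)⟩
  -- main equality
  have hVbar : Vbar A V bb = S.sup' hSne V := by
    rw [Vbar, dif_pos hSne]
  have hmain : S.sup' hSne V = (Finset.Icc 1 (min A bb.card)).sup' hIcc f := by
    apply le_antisymm
    · apply Finset.sup'_le
      intro b hbS
      exact le_trans (hub b hbS) (Finset.le_sup' f (hcardmem b hbS))
    · apply Finset.sup'_le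
      intro d hd
      rw [Finset.mem_Icc] at hd
      have h2 : d ≤ bb.card := le_trans hd.2 (min_le_right _ _)
      rw [← hVB d hd.1 h2]
      exact Finset.le_sup' V (hBS d hd.1 hd.2)
  have heq : Vbar A V bb = (Finset.Icc 1 (min A bb.card)).sup' hIcc f :=
    hVbar.trans hmain
  refine ⟨heq, ?_⟩
  -- representative group
  obtain ⟨d, hdmem, hd⟩ := Finset.exists_mem_eq_sup' hIcc f
  rw [Finset.mem_Icc] at hdmem
  have hdbb : d ≤ bb.card := le_trans hdmem.2 (min_le_right _ _)
  refine ⟨B d, ⟨hBsub d, ?_, ?_, ?_⟩, ?_⟩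
  · rw [← Finset.card_pos, hBcard d hdbb]; omega
  · rw [hBcard d hdbb]; exact le_trans hdmem.2 (min_le_left _ _)
  · rw [hVB d hdmem.1 hdbb, heq, hd]
  · intro m hm m' hm' hm''
    have hm1 : m ∈ l.take d := List.mem_toFinset.mp hm
    have hm'1 : m' ∈ l.drop d := by
      have : m' ∈ l.take d ++ l.drop d := by
        rw [List.take_append_drop]
        exact (hmem m').mpr hm'
      rcases List.mem_append.mp this with h | h
      · exact absurd (List.mem_toFinset.mpr h) hm''
      · exact h
    have hpair : List.Pairwise r (l.take d ++ l.drop d) := by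
      rw [List.take_append_drop]; exact hsorted
    exact ((List.pairwise_append.mp hpair).2.2 m hm1 m' hm'1)
end
end

section
/- Assume riders have homogeneous carpool disutility γ with γ(1)=0 and nondecreasing increments. Fix a route r with t_r > 0, define η^m_r = α^m − β^m·t_r and θ(d) = d·γ(d) + δ·d, and for a nonempty set b̄ ⊆ M let d(b̄) denote the largest d ∈ {1,…,min(A,|b̄|)} attaining max_{1 ≤ d' ≤ min(A,|b̄|)}(Σ_{j=1}^{d'} η^{(j)} − θ(d')·t_r), where η^{(1)} ≥ η^{(2)} ≥ … are the values η^m_r for m ∈ b̄ in nonincreasing order (so d(b̄) is the largest cardinality of a representative group of b̄ on r). Then d is monotone: for nonempty b̄ ⊆ b̄' ⊆ M, d(b̄) ≤ d(b̄'). -/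
open Classical
noncomputable section

variable {M : Type} [Fintype M] [DecidableEq M]

/-- `d` is the largest element of `s` maximizing `f` over `s` -/
def LargestMaximizer (f : ℕ → ℝ) (s : Finset ℕ) (d : ℕ) : Prop :=
  d ∈ s ∧ (∀ d' ∈ s, f d' ≤ f d) ∧ (∀ d' ∈ s, f d' = f d → d' ≤ d)

lemma fin_le_orderEmbedding {n m : ℕ} (f : Fin n ↪o Fin m) :
    ∀ i : ℕ, ∀ hi : i < n, i ≤ (f ⟨i, hi⟩ : ℕ) := by
  intro i
  induction i with
  | zero => intro _; exact Nat.zero_le _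
  | succ k ih =>
      intro hi
      have hk : k < n := Nat.lt_of_succ_lt hi
      have h1 : (f ⟨k, hk⟩ : ℕ) < (f ⟨k + 1, hi⟩ : ℕ) :=
        f.strictMono (show (⟨k, hk⟩ : Fin n) < ⟨k + 1, hi⟩ by simp [Fin.lt_def])
      have := ih hk
      omega

lemma get_le_get_of_sublist {l l' : List ℝ} (hsub : List.Sublist l l')
    (hl' : l'.Pairwise (· ≥ ·)) (j : ℕ) (hj : j < l.length) (hj' : j < l'.length) :
    l.get ⟨j, hj⟩ ≤ l'.get ⟨j, hj'⟩ := by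
  obtain ⟨f, hf⟩ := List.sublist_iff_exists_fin_orderEmbedding_get_eq.mp hsub
  rw [hf ⟨j, hj⟩]
  have hle : j ≤ (f ⟨j, hj⟩ : ℕ) := fin_le_orderEmbedding f j hj
  exact hl'.rel_get_of_le (by simpa [Fin.le_def] using hle)

lemma take_sum_diff_mono {l l' : List ℝ} (hsub : List.Sublist l l')
    (hl' : l'.Pairwise (· ≥ ·)) {a b : ℕ} (hab : a ≤ b) (hb : b ≤ l.length) :
    (l.take b).sum - (l.take a).sum ≤ (l'.take b).sum - (l'.take a).sum := by
  have hlen : l.length ≤ l'.length := hsub.length_le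
  induction b with
  | zero =>
      have : a = 0 := Nat.le_zero.mp hab
      simp [this]
  | succ k ih =>
      rcases Nat.lt_or_ge a (k + 1) with h | h
      · have hk : k < l.length := hb
        have hk' : k < l'.length := lt_of_lt_of_le hk hlen
        have ih' := ih (by omega) (by omega)
        rw [List.sum_take_succ _ _ hk, List.sum_take_succ _ _ hk']
        have h2 := get_le_get_of_sublist hsub hl' k hk hk'
        simp only [List.get_eq_getElem] at h2
        linarith
      · have : a = k + 1 := le_antisymm hab h
        simp [this]

/-- Under homogeneous carpool disutility `γ`, with `η^m = α^m − β^m t` and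
`θ(d) = d·γ(d) + δ·d`, let `d(b̄)` be the largest `d ∈ {1,…,min(A,|b̄|)}` attaining
`max_{d'} (∑_{j=1}^{d'} η^{(j)} − θ(d')·t)` (the largest cardinality of a representative
group of `b̄`).  Then `d` is monotone: for nonempty `b̄ ⊆ b̄'`, `d(b̄) ≤ d(b̄')`. -/
theorem largest_representative_size_monotone
    (A : ℕ) (hA : 1 ≤ A) (α β : M → ℝ) (γ : ℕ → ℝ) (δ t : ℝ)
    (hγ1 : γ 1 = 0)
    (hγ0 : ∀ d, 1 ≤ d → d ≤ A → 0 ≤ γ d)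
    (hγincr : ∀ d, 2 ≤ d → d < A → γ d - γ (d - 1) ≤ γ (d + 1) - γ d)
    (hδ : 0 ≤ δ) (ht : 0 < t)
    (bb bb' : Finset M) (hbb : bb.Nonempty) (hsub : bb ⊆ bb')
    (d d' : ℕ)
    (hd : LargestMaximizer
      (fun d => topSum (fun m => α m - β m * t) bb d - ((d : ℝ) * γ d + δ * (d : ℝ)) * t)
      (Finset.Icc 1 (min A bb.card)) d)
    (hd' : LargestMaximizer
      (fun d => topSum (fun m => α m - β m * t) bb' d - ((d : ℝ) * γ d + δ * (d : ℝ)) * t)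
      (Finset.Icc 1 (min A bb'.card)) d') :
    d ≤ d' := by
  by_contra hlt
  push_neg at hlt
  set η : M → ℝ := fun m => α m - β m * t with hη
  obtain ⟨hdmem, hdmax, hdlar⟩ := hd
  obtain ⟨hdmem', hdmax', hdlar'⟩ := hd'
  simp only [Finset.mem_Icc] at hdmem hdmem'
  have hcard : bb.card ≤ bb'.card := Finset.card_le_card hsub
  -- lists
  set l : List ℝ := ((bb.val.map η).sort (· ≤ ·)).reverse with hl
  set l' : List ℝ := ((bb'.val.map η).sort (· ≤ ·)).reverse with hl'
  have hml : bb.val.map η ≤ bb'.val.map η :=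
    Multiset.map_le_map (Finset.val_le_iff.mpr hsub)
  have hsp : List.Subperm ((bb.val.map η).sort (· ≤ ·)) ((bb'.val.map η).sort (· ≤ ·)) := by
    rw [← Multiset.coe_le]
    simpa [Multiset.sort_eq] using hml
  have hslist : List.Sublist l l' :=
    (List.sublist_of_subperm_of_pairwise hsp (Multiset.pairwise_sort _ _)
      (Multiset.pairwise_sort _ _)).reverse
  have hsorted : l'.Pairwise (· ≥ ·) := by
    rw [hl']
    exact List.pairwise_reverse.mpr ((Multiset.pairwise_sort _ (· ≤ ·)).imp fun h => h)
  have hlen : l.length = bb.card := by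
    rw [hl, List.length_reverse, Multiset.length_sort, Multiset.card_map]
    rfl
  -- membership facts
  have hd'mem : d' ∈ Finset.Icc 1 (min A bb.card) := by
    rw [Finset.mem_Icc]
    exact ⟨hdmem'.1, le_trans (by omega) hdmem.2⟩
  have hdmem2 : d ∈ Finset.Icc 1 (min A bb'.card) := by
    rw [Finset.mem_Icc]
    refine ⟨hdmem.1, le_trans hdmem.2 ?_⟩
    exact min_le_min le_rfl hcard
  have hf : topSum η bb d' - ((d' : ℝ) * γ d' + δ * (d' : ℝ)) * t ≤
      topSum η bb d - ((d : ℝ) * γ d + δ * (d : ℝ)) * t := hdmax d' hd'mem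
  have hg : topSum η bb' d - ((d : ℝ) * γ d + δ * (d : ℝ)) * t ≤
      topSum η bb' d' - ((d' : ℝ) * γ d' + δ * (d' : ℝ)) * t := hdmax' d hdmem2
  have hgne : topSum η bb' d - ((d : ℝ) * γ d + δ * (d : ℝ)) * t ≠
      topSum η bb' d' - ((d' : ℝ) * γ d' + δ * (d' : ℝ)) * t := by
    intro heq
    exact absurd (hdlar' d hdmem2 heq) (by omega)
  have hgd : topSum η bb' d - ((d : ℝ) * γ d + δ * (d : ℝ)) * t <
      topSum η bb' d' - ((d' : ℝ) * γ d' + δ * (d' : ℝ)) * t := lt_of_le_of_ne hg hgne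
  have hkey : (l.take d).sum - (l.take d').sum ≤ (l'.take d).sum - (l'.take d').sum :=
    take_sum_diff_mono hslist hsorted (le_of_lt hlt)
      (by rw [hlen]; exact le_trans hdmem.2 (min_le_right _ _))
  have e1 : topSum η bb d = (l.take d).sum := rfl
  have e2 : topSum η bb d' = (l.take d').sum := rfl
  have e3 : topSum η bb' d = (l'.take d).sum := rfl
  have e4 : topSum η bb' d' = (l'.take d').sum := rfl
  rw [e1, e2] at hf
  rw [e3, e4] at hgd
  linarith
end
end
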